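/- arXiv:2305.07765 — 12 statements merged into one kernel-verified Lean document; each statement's English description precedes it below -/
import Mathlib

section
/- For any real number γ > 1 and any finite-dimensional vectors x, y ∈ ℝ^d, there exists a constant C₁ > 0 depending only on γ and d such that for every δ with 0 ≤ δ ≤ 1, ‖ ‖x‖^{γ-2} x − ‖y‖^{γ-2} y ‖ ≤ C₁ ‖x − y‖^{1−δ} (‖x‖ + ‖y‖)^{γ−2+δ}, where ‖·‖ is the Euclidean norm. -/
open Real

lemma mvt_rpow (q : ℝ) {b a : ℝ} (hb : 0 < b) (hba : b ≤ a) :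
    ∃ c, b ≤ c ∧ c ≤ a ∧ a ^ q - b ^ q = q * c ^ (q - 1) * (a - b) := by
  rcases eq_or_lt_of_le hba with h | h
  · exact ⟨b, le_rfl, hba, by rw [← h]; ring⟩
  · have hcont : ContinuousOn (fun u : ℝ => u ^ q) (Set.Icc b a) := by
      intro u hu
      exact ((Real.hasDerivAt_rpow_const (p := q)
        (Or.inl (ne_of_gt (lt_of_lt_of_le hb hu.1)))).continuousAt).continuousWithinAt
    have hderiv : ∀ u ∈ Set.Ioo b a,
        HasDerivAt (fun u : ℝ => u ^ q) (q * u ^ (q - 1)) u := fun u hu =>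
      Real.hasDerivAt_rpow_const (Or.inl (ne_of_gt (lt_of_lt_of_le hb hu.1.le)))
    obtain ⟨c, hc, hceq⟩ := exists_hasDerivAt_eq_slope (fun u : ℝ => u ^ q)
      (fun u => q * u ^ (q - 1)) h hcont hderiv
    refine ⟨c, hc.1.le, hc.2.le, ?_⟩
    have hab : a - b ≠ 0 := sub_ne_zero.2 (ne_of_gt h)
    field_simp at hceq
    linarith [hceq]

lemma rpow_sub_A {q b a : ℝ} (hq : 1 ≤ q) (hb : 0 < b) (hba : b ≤ a) :
    a ^ q - b ^ q ≤ q * a ^ (q - 1) * (a - b) := by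
  obtain ⟨c, hc1, hc2, heq⟩ := mvt_rpow q hb hba
  have hc0 : 0 ≤ c := le_trans hb.le hc1
  have h1 : c ^ (q - 1) ≤ a ^ (q - 1) := Real.rpow_le_rpow hc0 hc2 (by linarith)
  rw [heq]
  gcongr
  all_goals first | linarith | exact Real.rpow_nonneg hc0 _

lemma rpow_sub_B {q b a : ℝ} (hq0 : 0 ≤ q) (hq : q ≤ 1) (hb : 0 < b) (hba : b ≤ a) :
    a ^ q - b ^ q ≤ q * b ^ (q - 1) * (a - b) := by
  obtain ⟨c, hc1, hc2, heq⟩ := mvt_rpow q hb hba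
  have h1 : c ^ (q - 1) ≤ b ^ (q - 1) :=
    Real.rpow_le_rpow_of_nonpos hb hc1 (by linarith)
  rw [heq]
  gcongr
  all_goals first | linarith | exact Real.rpow_nonneg (le_trans hb.le hc1) _

lemma rpow_sub_C {q b a : ℝ} (hq : q ≤ 0) (hb : 0 < b) (hba : b ≤ a) :
    b ^ q - a ^ q ≤ (-q) * b ^ (q - 1) * (a - b) := by
  obtain ⟨c, hc1, hc2, heq⟩ := mvt_rpow q hb hba
  have h1 : c ^ (q - 1) ≤ b ^ (q - 1) :=
    Real.rpow_le_rpow_of_nonpos hb hc1 (by linarith)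
  have h2 : b ^ q - a ^ q = (-q) * c ^ (q - 1) * (a - b) := by linarith [heq]
  rw [h2]
  gcongr
  all_goals first | linarith | exact Real.rpow_nonneg (le_trans hb.le hc1) _

lemma term2_bound {p a b r : ℝ} (hp : 0 ≤ p) (hb : 0 ≤ b) (hba : b ≤ a)
    (hr : a - b ≤ r) (hr0 : 0 ≤ r) :
    (a ^ p - b ^ p) * b ≤ p * (a + b) ^ p * r := by
  rcases hb.eq_or_lt with h | hb'
  · subst h
    simp only [add_zero, mul_zero]
    positivity
  · have ha : 0 < a := lt_of_lt_of_le hb' hba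
    have hab : 0 < a + b := by linarith
    rcases le_or_gt 1 p with hp1 | hp1
    · have h1 := rpow_sub_A hp1 hb' hba
      have h2 : a ^ (p - 1) ≤ (a + b) ^ (p - 1) :=
        Real.rpow_le_rpow ha.le (by linarith) (by linarith)
      have h3 : (a + b) ^ (p - 1) * (a + b) = (a + b) ^ p := by
        rw [← Real.rpow_add_one (ne_of_gt hab)]; ring_nf
      calc (a ^ p - b ^ p) * b ≤ (p * a ^ (p - 1) * (a - b)) * b :=
            mul_le_mul_of_nonneg_right h1 hb'.le
        _ = p * (a ^ (p - 1) * b) * (a - b) := by ring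
        _ ≤ p * ((a + b) ^ (p - 1) * (a + b)) * r := by
            gcongr
            all_goals first | linarith | positivity | exact Real.rpow_nonneg ha.le _
        _ = p * (a + b) ^ p * r := by rw [h3]
    · have h1 := rpow_sub_B hp hp1.le hb' hba
      have h2 : b ^ (p - 1) * b = b ^ p := by
        rw [← Real.rpow_add_one (ne_of_gt hb')]; ring_nf
      have h3 : b ^ p ≤ (a + b) ^ p := Real.rpow_le_rpow hb'.le (by linarith) hp
      calc (a ^ p - b ^ p) * b ≤ (p * b ^ (p - 1) * (a - b)) * b :=
            mul_le_mul_of_nonneg_right h1 hb'.le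
        _ = p * (b ^ (p - 1) * b) * (a - b) := by ring
        _ = p * b ^ p * (a - b) := by rw [h2]
        _ ≤ p * (a + b) ^ p * r := by
            gcongr
            all_goals first | linarith | positivity | exact Real.rpow_nonneg hb'.le _

section vec
variable {E : Type*} [NormedAddCommGroup E] [NormedSpace ℝ E]

lemma decomp (p : ℝ) (x y : E) :
    ‖(‖x‖ ^ p) • x - (‖y‖ ^ p) • y‖ ≤
      ‖x‖ ^ p * ‖x - y‖ + |‖x‖ ^ p - ‖y‖ ^ p| * ‖y‖ := by
  have h : (‖x‖ ^ p) • x - (‖y‖ ^ p) • y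
      = (‖x‖ ^ p) • (x - y) + (‖x‖ ^ p - ‖y‖ ^ p) • y := by
    rw [smul_sub, sub_smul]; abel
  rw [h]
  refine le_trans (norm_add_le _ _) ?_
  rw [norm_smul, norm_smul, Real.norm_eq_abs, Real.norm_eq_abs,
    abs_of_nonneg (Real.rpow_nonneg (norm_nonneg x) p)]

lemma base1 {p : ℝ} (hp : 0 ≤ p) (x y : E) (hba : ‖y‖ ≤ ‖x‖) :
    ‖(‖x‖ ^ p) • x - (‖y‖ ^ p) • y‖ ≤ (1 + p) * (‖x‖ + ‖y‖) ^ p * ‖x - y‖ := by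
  have hd := decomp p x y
  have hnn : ‖y‖ ^ p ≤ ‖x‖ ^ p := Real.rpow_le_rpow (norm_nonneg y) hba hp
  rw [abs_of_nonneg (by linarith)] at hd
  have h1 : ‖x‖ ^ p ≤ (‖x‖ + ‖y‖) ^ p :=
    Real.rpow_le_rpow (norm_nonneg x) (by linarith [norm_nonneg y]) hp
  have h2 : (‖x‖ ^ p - ‖y‖ ^ p) * ‖y‖ ≤ p * (‖x‖ + ‖y‖) ^ p * ‖x - y‖ :=
    term2_bound hp (norm_nonneg y) hba
      (by linarith [abs_le.mp (abs_norm_sub_norm_le x y)])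
      (norm_nonneg _)
  nlinarith [norm_nonneg (x - y), Real.rpow_nonneg (by positivity : (0:ℝ) ≤ ‖x‖ + ‖y‖) p]

end vec

section vec2
variable {E : Type*} [NormedAddCommGroup E] [NormedSpace ℝ E]

lemma base2 {p : ℝ} (hp1 : -1 < p) (hp0 : p < 0) (x y : E) (hba : ‖y‖ ≤ ‖x‖) :
    ‖(‖x‖ ^ p) • x - (‖y‖ ^ p) • y‖ ≤ 4 * ‖x - y‖ ^ (p + 1) := by
  by_cases hxy : x = y
  · subst hxy
    simp only [sub_self, norm_zero]
    positivity
  · have hr : 0 < ‖x - y‖ := by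
      rw [norm_pos_iff]; exact sub_ne_zero.2 hxy
    set r := ‖x - y‖ with hrdef
    have hsum : r ≤ ‖x‖ + ‖y‖ := norm_sub_le x y
    have ha : 0 < ‖x‖ := by
      rcases (norm_nonneg x).eq_or_lt with h | h
      · exfalso; nlinarith [norm_nonneg y]
      · exact h
    have ha2 : r / 2 ≤ ‖x‖ := by linarith
    have hrp1 : r ^ (p + 1) = r ^ p * r := by
      rw [Real.rpow_add_one (ne_of_gt hr)]
    -- term 1
    have h2p : ((2:ℝ) ^ p)⁻¹ ≤ 2 := by
      have h1 : (2:ℝ) ^ (-1:ℝ) ≤ 2 ^ p :=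
        Real.rpow_le_rpow_of_exponent_le one_le_two (by linarith)
      rw [Real.rpow_neg_one] at h1
      rw [inv_le_comm₀ (by positivity) (by norm_num)]
      linarith
    have ht1 : ‖x‖ ^ p ≤ 2 * r ^ p := by
      have h1 : ‖x‖ ^ p ≤ (r / 2) ^ p :=
        Real.rpow_le_rpow_of_nonpos (by positivity) ha2 hp0.le
      have h2 : (r / 2) ^ p = r ^ p * ((2:ℝ) ^ p)⁻¹ := by
        rw [div_eq_mul_inv, Real.mul_rpow hr.le (by norm_num),
          ← Real.inv_rpow (by norm_num), Real.inv_rpow (by norm_num)]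
      calc ‖x‖ ^ p ≤ r ^ p * ((2:ℝ) ^ p)⁻¹ := by rw [← h2]; exact h1
        _ ≤ r ^ p * 2 := by
            exact mul_le_mul_of_nonneg_left h2p (Real.rpow_nonneg hr.le p)
        _ = 2 * r ^ p := by ring
    -- term 2
    have ht2 : |‖x‖ ^ p - ‖y‖ ^ p| * ‖y‖ ≤ 2 * r ^ (p + 1) := by
      rcases (norm_nonneg y).eq_or_lt with hb | hb
      · rw [← hb, mul_zero]; positivity
      · have habp : ‖x‖ ^ p ≤ ‖y‖ ^ p :=
          Real.rpow_le_rpow_of_nonpos hb hba hp0.le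
        rw [abs_sub_comm, abs_of_nonneg (by linarith)]
        rcases le_or_gt ‖y‖ (2 * r) with hcase | hcase
        · have h1 : (‖y‖ ^ p - ‖x‖ ^ p) * ‖y‖ ≤ ‖y‖ ^ p * ‖y‖ :=
            mul_le_mul_of_nonneg_right
              (sub_le_self _ (Real.rpow_nonneg ha.le p)) hb.le
          have h2 : ‖y‖ ^ p * ‖y‖ = ‖y‖ ^ (p + 1) := by
            rw [Real.rpow_add_one (ne_of_gt hb)]
          have h3 : ‖y‖ ^ (p + 1) ≤ (2 * r) ^ (p + 1) :=
            Real.rpow_le_rpow hb.le hcase (by linarith)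
          have h4 : (2 * r) ^ (p + 1) = 2 ^ (p + 1) * r ^ (p + 1) :=
            Real.mul_rpow (by norm_num) hr.le
          have h5 : (2:ℝ) ^ (p + 1) ≤ 2 := by
            calc (2:ℝ) ^ (p + 1) ≤ 2 ^ (1:ℝ) :=
                  Real.rpow_le_rpow_of_exponent_le one_le_two (by linarith)
              _ = 2 := Real.rpow_one 2
          have h6 : 0 ≤ r ^ (p + 1) := Real.rpow_nonneg hr.le _
          nlinarith
        · have hC := rpow_sub_C hp0.le hb hba
          have hab : ‖x‖ - ‖y‖ ≤ r := by
            have := abs_le.mp (abs_norm_sub_norm_le x y)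
            linarith [this.2]
          have hbp : ‖y‖ ^ p ≤ r ^ p := by
            calc ‖y‖ ^ p ≤ (2 * r) ^ p :=
                  Real.rpow_le_rpow_of_nonpos (by positivity) hcase.le hp0.le
              _ ≤ r ^ p := Real.rpow_le_rpow_of_nonpos hr (by linarith) hp0.le
          have h2 : ‖y‖ ^ (p - 1) * ‖y‖ = ‖y‖ ^ p := by
            rw [← Real.rpow_add_one (ne_of_gt hb)]; ring_nf
          calc (‖y‖ ^ p - ‖x‖ ^ p) * ‖y‖
              ≤ (-p * ‖y‖ ^ (p - 1) * (‖x‖ - ‖y‖)) * ‖y‖ :=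
                mul_le_mul_of_nonneg_right hC hb.le
            _ = -p * (‖y‖ ^ (p - 1) * ‖y‖) * (‖x‖ - ‖y‖) := by ring
            _ = -p * ‖y‖ ^ p * (‖x‖ - ‖y‖) := by rw [h2]
            _ ≤ 1 * r ^ p * r := by
                gcongr
                all_goals
                  first | linarith | exact Real.rpow_nonneg hb.le _
            _ = r ^ (p + 1) := by rw [hrp1]; ring
            _ ≤ 2 * r ^ (p + 1) := by
                nlinarith [Real.rpow_nonneg hr.le (p + 1)]
    calc ‖(‖x‖ ^ p) • x - (‖y‖ ^ p) • y‖
        ≤ ‖x‖ ^ p * r + |‖x‖ ^ p - ‖y‖ ^ p| * ‖y‖ := decomp p x y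
      _ ≤ 2 * r ^ p * r + 2 * r ^ (p + 1) := by
          have := mul_le_mul_of_nonneg_right ht1 hr.le
          linarith
      _ = 4 * r ^ (p + 1) := by rw [hrp1]; ring

lemma base1' {p : ℝ} (hp : 0 ≤ p) (x y : E) :
    ‖(‖x‖ ^ p) • x - (‖y‖ ^ p) • y‖ ≤ (1 + p) * (‖x‖ + ‖y‖) ^ p * ‖x - y‖ := by
  rcases le_total ‖y‖ ‖x‖ with h | h
  · exact base1 hp x y h
  · have := base1 hp y x h
    rwa [norm_sub_rev ((‖y‖ ^ p) • y), norm_sub_rev y x, add_comm ‖y‖] at this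

lemma base2' {p : ℝ} (hp1 : -1 < p) (hp0 : p < 0) (x y : E) :
    ‖(‖x‖ ^ p) • x - (‖y‖ ^ p) • y‖ ≤ 4 * ‖x - y‖ ^ (p + 1) := by
  rcases le_total ‖y‖ ‖x‖ with h | h
  · exact base2 hp1 hp0 x y h
  · have := base2 hp1 hp0 y x h
    rwa [norm_sub_rev ((‖y‖ ^ p) • y), norm_sub_rev y x] at this

end vec2

lemma step_mono {t s δ₀ δ e : ℝ} (ht : 0 ≤ t) (hts : t ≤ s) (h0 : δ₀ < 1)
    (hd : δ₀ ≤ δ) :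
    t ^ (1 - δ₀) * s ^ (e + δ₀) ≤ t ^ (1 - δ) * s ^ (e + δ) := by
  rcases ht.eq_or_lt with h | ht'
  · rw [← h, Real.zero_rpow (by intro hc; rw [sub_eq_zero] at hc; linarith [hc]),
      zero_mul]
    have hs : (0:ℝ) ≤ s := h ▸ hts
    exact mul_nonneg (Real.rpow_nonneg le_rfl _) (Real.rpow_nonneg hs _)
  · have hs : 0 < s := lt_of_lt_of_le ht' hts
    have hkey : t ^ (δ - δ₀) ≤ s ^ (δ - δ₀) :=
      Real.rpow_le_rpow ht'.le hts (by linarith)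
    have e1 : t ^ (1 - δ₀) = t ^ (1 - δ) * t ^ (δ - δ₀) := by
      rw [← Real.rpow_add ht']; ring_nf
    have e2 : s ^ (e + δ₀) * s ^ (δ - δ₀) = s ^ (e + δ) := by
      rw [← Real.rpow_add hs]; ring_nf
    calc t ^ (1 - δ₀) * s ^ (e + δ₀)
        = t ^ (1 - δ) * t ^ (δ - δ₀) * s ^ (e + δ₀) := by rw [e1]
      _ ≤ t ^ (1 - δ) * s ^ (δ - δ₀) * s ^ (e + δ₀) := by
          gcongr
          all_goals first | linarith | exact Real.rpow_nonneg ht'.le _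
      _ = t ^ (1 - δ) * (s ^ (e + δ₀) * s ^ (δ - δ₀)) := by ring
      _ = t ^ (1 - δ) * s ^ (e + δ) := by rw [e2]

theorem stmt_0 (d : ℕ) (hd : 1 ≤ d) (γ : ℝ) (hγ : 1 < γ) :
    ∃ C₁ : ℝ, 0 < C₁ ∧ ∀ (x y : EuclideanSpace ℝ (Fin d)) (δ : ℝ),
      0 ≤ δ → δ ≤ 1 → 0 ≤ γ - 2 + δ →
      ‖(‖x‖ ^ (γ - 2)) • x - (‖y‖ ^ (γ - 2)) • y‖ ≤
        C₁ * ‖x - y‖ ^ (1 - δ) * (‖x‖ + ‖y‖) ^ (γ - 2 + δ) := by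
  refine ⟨γ + 5, by linarith, ?_⟩
  intro x y δ hδ0 hδ1 hδ2
  set t := ‖x - y‖ with htdef
  set s := ‖x‖ + ‖y‖ with hsdef
  have ht : 0 ≤ t := norm_nonneg _
  have hts : t ≤ s := norm_sub_le x y
  have hs : 0 ≤ s := le_trans ht hts
  have hfinal_nonneg : 0 ≤ t ^ (1 - δ) * s ^ (γ - 2 + δ) :=
    mul_nonneg (Real.rpow_nonneg ht _) (Real.rpow_nonneg hs _)
  rcases le_or_gt 2 γ with hc | hc
  · have hb := base1' (p := γ - 2) (by linarith) x y
    have hstep : t ^ (1:ℝ) * s ^ (γ - 2) ≤ t ^ (1 - δ) * s ^ (γ - 2 + δ) := by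
      have h := step_mono (δ₀ := 0) (δ := δ) (e := γ - 2) ht hts one_pos hδ0
      simpa using h
    rw [Real.rpow_one] at hstep
    calc ‖(‖x‖ ^ (γ - 2)) • x - (‖y‖ ^ (γ - 2)) • y‖
        ≤ (1 + (γ - 2)) * s ^ (γ - 2) * t := hb
      _ = (γ - 1) * (t * s ^ (γ - 2)) := by ring
      _ ≤ (γ + 5) * (t ^ (1 - δ) * s ^ (γ - 2 + δ)) := by
          have h2 : 0 ≤ t * s ^ (γ - 2) :=
            mul_nonneg ht (Real.rpow_nonneg hs _)
          exact mul_le_mul (by linarith) hstep h2 (by linarith)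
      _ = (γ + 5) * t ^ (1 - δ) * s ^ (γ - 2 + δ) := by ring
  · have hb := base2' (p := γ - 2) (by linarith) (by linarith) x y
    have hstep := step_mono (δ₀ := 2 - γ) (δ := δ) (e := γ - 2) ht hts
      (by linarith) (by linarith)
    calc ‖(‖x‖ ^ (γ - 2)) • x - (‖y‖ ^ (γ - 2)) • y‖
        ≤ 4 * t ^ (γ - 2 + 1) := hb
      _ = 4 * (t ^ (1 - (2 - γ)) * s ^ (γ - 2 + (2 - γ))) := by
          rw [show γ - 2 + (2 - γ) = (0:ℝ) by ring, Real.rpow_zero,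
            show γ - 2 + 1 = 1 - (2 - γ) by ring]
          ring
      _ ≤ (γ + 5) * (t ^ (1 - δ) * s ^ (γ - 2 + δ)) := by
          have h2 : 0 ≤ t ^ (1 - (2 - γ)) * s ^ (γ - 2 + (2 - γ)) :=
            mul_nonneg (Real.rpow_nonneg ht _) (Real.rpow_nonneg hs _)
          exact mul_le_mul (by linarith) hstep h2 (by linarith)
      _ = (γ + 5) * t ^ (1 - δ) * s ^ (γ - 2 + δ) := by ring
end

section
/- For any real number γ > 1 and any vectors x, y ∈ ℝ^d, there exists a constant C₂ > 0 depending only on γ and d such that for every δ ≥ 0 with γ − 2 − δ ≥ 0, ⟨x − y, ‖x‖^{γ-2} x − ‖y‖^{γ-2} y⟩ ≥ C₂ ‖x − y‖^{2+δ} (‖x‖ + ‖y‖)^{γ−2−δ}, where ⟨·,·⟩ is the standard inner product on ℝ^d. -/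
theorem stmt_1 (d : ℕ) (hd : 1 ≤ d) (γ : ℝ) (hγ : 1 < γ) :
    ∃ C₂ : ℝ, 0 < C₂ ∧ ∀ (x y : EuclideanSpace ℝ (Fin d)) (δ : ℝ),
      0 ≤ δ → 0 ≤ γ - 2 - δ →
      (inner ℝ (x - y) ((‖x‖ ^ (γ - 2)) • x - (‖y‖ ^ (γ - 2)) • y) : ℝ) ≥
        C₂ * ‖x - y‖ ^ (2 + δ) * (‖x‖ + ‖y‖) ^ (γ - 2 - δ) := by
  refine ⟨(1/2 : ℝ) ^ (γ - 1), Real.rpow_pos_of_pos (by norm_num) _, ?_⟩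
  intro x y δ hδ hγδ
  have hp : (0:ℝ) ≤ γ - 2 := by linarith
  set a := ‖x‖ with ha
  set b := ‖y‖ with hb
  set n := ‖x - y‖ with hn
  have ha0 : 0 ≤ a := norm_nonneg x
  have hb0 : 0 ≤ b := norm_nonneg y
  have hn0 : 0 ≤ n := norm_nonneg _
  have hnab : n ≤ a + b := norm_sub_le x y
  set A := a ^ (γ - 2) with hA
  set B := b ^ (γ - 2) with hB
  have hA0 : 0 ≤ A := Real.rpow_nonneg ha0 _
  have hB0 : 0 ≤ B := Real.rpow_nonneg hb0 _
  have hIP : (inner ℝ (x - y) (A • x - B • y) : ℝ)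
      = A * a^2 + B * b^2 - (A + B) * (inner ℝ x y : ℝ) := by
    simp only [inner_sub_left, inner_sub_right, real_inner_smul_right,
      real_inner_self_eq_norm_sq, real_inner_comm x y, ← ha, ← hb]
    ring
  have hxy2 : n ^ 2 = a^2 + b^2 - 2 * (inner ℝ x y : ℝ) := by
    rw [hn, ha, hb, norm_sub_sq_real]; ring
  have hkey : 0 ≤ (A - B) * (a^2 - b^2) := by
    rcases le_total a b with h | h
    · have h1 : A ≤ B := Real.rpow_le_rpow ha0 h hp
      have h2 : a^2 ≤ b^2 := by nlinarith
      nlinarith [mul_nonneg (sub_nonneg.mpr h1) (sub_nonneg.mpr h2)]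
    · have h1 : B ≤ A := Real.rpow_le_rpow hb0 h hp
      have h2 : b^2 ≤ a^2 := by nlinarith
      nlinarith [mul_nonneg (sub_nonneg.mpr h1) (sub_nonneg.mpr h2)]
  have hmain : (inner ℝ (x - y) (A • x - B • y) : ℝ) ≥ (1/2) * (A + B) * n^2 := by
    rw [hIP]; nlinarith [hkey, hxy2]
  rcases eq_or_lt_of_le hn0 with hn0' | hnpos
  · have hz : n ^ (2+δ) = 0 := by
      rw [← hn0']; exact Real.zero_rpow (by linarith)
    rw [hz]
    have : (1/2 : ℝ) * (A + B) * n^2 = 0 := by rw [← hn0']; ring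
    rw [this] at hmain
    simpa using hmain
  · have hab : 0 < a + b := lt_of_lt_of_le hnpos hnab
    have e1 : n ^ (2+δ) = n^2 * n^δ := by
      rw [Real.rpow_add hnpos, Real.rpow_two]
    have e2 : (1/2:ℝ)^(γ-1) = (1/2) * (1/2)^(γ-2) := by
      rw [show γ - 1 = 1 + (γ-2) by ring, Real.rpow_add (by norm_num), Real.rpow_one]
    have e3 : n^δ ≤ (a+b)^δ := Real.rpow_le_rpow hn0 hnab hδ
    have e5 : (a+b)^δ * (a+b)^(γ-2-δ) = (a+b)^(γ-2) := by
      rw [← Real.rpow_add hab]; ring_nf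
    have e4 : (1/2:ℝ)^(γ-2) * (a+b)^(γ-2) ≤ A + B := by
      rw [← Real.mul_rpow (by norm_num) hab.le]
      rcases le_total a b with h | h
      · have : ((1:ℝ)/2*(a+b))^(γ-2) ≤ B :=
          Real.rpow_le_rpow (by positivity) (by linarith) hp
        linarith
      · have : ((1:ℝ)/2*(a+b))^(γ-2) ≤ A :=
          Real.rpow_le_rpow (by positivity) (by linarith) hp
        linarith
    have hRHS : (1/2:ℝ)^(γ-1) * n^(2+δ) * (a+b)^(γ-2-δ) ≤ (1/2)*(A+B)*n^2 := by
      calc (1/2:ℝ)^(γ-1) * n^(2+δ) * (a+b)^(γ-2-δ)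
          = (1/2)*n^2 * ((1/2)^(γ-2) * (n^δ * (a+b)^(γ-2-δ))) := by
            rw [e1, e2]; ring
        _ ≤ (1/2)*n^2 * ((1/2)^(γ-2) * ((a+b)^δ * (a+b)^(γ-2-δ))) := by
            gcongr
        _ = (1/2)*n^2 * ((1/2)^(γ-2) * (a+b)^(γ-2)) := by rw [e5]
        _ ≤ (1/2)*n^2 * (A + B) := by
            gcongr
        _ = (1/2)*(A+B)*n^2 := by ring
    exact le_trans hRHS hmain
end

section
/- Let y : [0, ∞) → ℝ be a differentiable nonnegative function, 1 < p < 2, C_m > 0, B ≥ 0, and ψ : [0,∞) → [0,∞) continuous, with y'(t) ≤ −2C_m ψ(t) y(t)^{p−1} + B y(t) wherever y(t) > 0. If y(0)^{2−p} < 2C_m(2−p) ∫₀^∞ ψ(s) e^{−B(2−p)s} ds, then there exists T > 0 such that y(t) = 0 for all t ≥ T. -/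
theorem stmt_4 (p Cm B : ℝ) (hp1 : 1 < p) (hp2 : p < 2) (hCm : 0 < Cm) (hB : 0 ≤ B)
    (ψ : ℝ → ℝ) (hψcont : Continuous ψ) (hψpos : ∀ t, 0 ≤ t → 0 ≤ ψ t)
    (y : ℝ → ℝ) (hy : Differentiable ℝ y) (hynn : ∀ t, 0 ≤ t → 0 ≤ y t)
    (hineq : ∀ t, 0 ≤ t → 0 < y t →
      deriv y t ≤ -2 * Cm * ψ t * (y t) ^ (p - 1) + B * y t)
    (hstay : ∀ t, 0 ≤ t → y t = 0 → ∀ s, t ≤ s → y s = 0)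
    (hinit : (y 0) ^ (2 - p) <
      2 * Cm * (2 - p) * ∫ s in Set.Ioi (0 : ℝ), ψ s * Real.exp (-B * (2 - p) * s)) :
    ∃ T > 0, ∀ t, T ≤ t → y t = 0 := by
  set a : ℝ := 2 - p with ha_def
  have ha : 0 < a := by simp [ha_def]; linarith
  have ha1 : a < 1 := by simp [ha_def]; linarith
  set c : ℝ := 2 * Cm * a with hc_def
  have hc : 0 < c := by positivity
  set φ : ℝ → ℝ := fun s => ψ s * Real.exp (-B * a * s) with hφ_def
  have hφcont : Continuous φ := by
    apply hψcont.mul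
    exact (Real.continuous_exp.comp (by continuity))
  -- integrability must hold, else integral is 0 and hinit is absurd
  have hint : MeasureTheory.IntegrableOn φ (Set.Ioi (0:ℝ)) := by
    by_contra h
    rw [MeasureTheory.integral_undef h] at hinit
    have : (0:ℝ) ≤ (y 0) ^ a := Real.rpow_nonneg (hynn 0 le_rfl) a
    nlinarith
  -- choose T
  have htend : Filter.Tendsto (fun t => ∫ s in (0:ℝ)..t, φ s) Filter.atTop
      (nhds (∫ s in Set.Ioi (0:ℝ), φ s)) :=
    MeasureTheory.intervalIntegral_tendsto_integral_Ioi 0 hint Filter.tendsto_id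
  have hlt : (y 0) ^ a < c * ∫ s in Set.Ioi (0:ℝ), φ s := by
    calc (y 0) ^ a < 2 * Cm * a * ∫ s in Set.Ioi (0:ℝ), φ s := hinit
    _ = c * ∫ s in Set.Ioi (0:ℝ), φ s := by rw [hc_def]
  have hev : ∀ᶠ t in Filter.atTop, (y 0) ^ a < c * ∫ s in (0:ℝ)..t, φ s :=
    (htend.const_mul c).eventually (eventually_gt_nhds hlt)
  obtain ⟨T, hT1, hT2⟩ := (hev.and (Filter.eventually_ge_atTop 1)).exists
  -- main claim: y hits zero in [0, T]
  have hex : ∃ t ∈ Set.Icc (0:ℝ) T, y t = 0 := by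
    by_contra hcon
    push_neg at hcon
    have hpos : ∀ t ∈ Set.Icc (0:ℝ) T, 0 < y t :=
      fun t ht => (hynn t ht.1).lt_of_ne (Ne.symm (hcon t ht))
    -- Lyapunov function
    set g : ℝ → ℝ := fun t => (y t) ^ a * Real.exp (-B * a * t)
      + c * ∫ s in (0:ℝ)..t, φ s with hg_def
    have hE : ∀ x : ℝ, HasDerivAt (fun t => Real.exp (-B * a * t))
        (-(B * a) * Real.exp (-B * a * x)) x := by
      intro x
      have h0 : HasDerivAt (fun t : ℝ => -B * a * t) (-B * a) x := by
        simpa using (hasDerivAt_id x).const_mul (-B * a)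
      have := h0.exp
      convert this using 1
      ring
    have hD : ∀ x ∈ Set.Icc (0:ℝ) T, HasDerivAt g
        ((deriv y x * a * (y x) ^ (a - 1)) * Real.exp (-B * a * x)
          + (y x) ^ a * (-(B * a) * Real.exp (-B * a * x)) + c * φ x) x := by
      intro x hx
      have hne : y x ≠ 0 := ne_of_gt (hpos x hx)
      have h1 : HasDerivAt (fun t => (y t) ^ a) (deriv y x * a * (y x) ^ (a - 1)) x :=
        (hy x).hasDerivAt.rpow_const (Or.inl hne)
      have h3 : HasDerivAt (fun u => ∫ s in (0:ℝ)..u, φ s) (φ x) x :=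
        intervalIntegral.integral_hasDerivAt_right (hφcont.intervalIntegrable _ _)
          (hφcont.stronglyMeasurable.stronglyMeasurableAtFilter) hφcont.continuousAt
      exact (h1.mul (hE x)).add (h3.const_mul c)
    have hanti : AntitoneOn g (Set.Icc 0 T) := by
      apply antitoneOn_of_deriv_nonpos (convex_Icc 0 T)
      · intro x hx
        exact (hD x hx).differentiableAt.continuousAt.continuousWithinAt
      · intro x hx
        rw [interior_Icc] at hx
        exact ((hD x (Set.mem_Icc_of_Ioo hx)).differentiableAt).differentiableWithinAt
      · intro x hx
        rw [interior_Icc] at hx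
        have hxIcc : x ∈ Set.Icc (0:ℝ) T := Set.mem_Icc_of_Ioo hx
        rw [(hD x hxIcc).deriv]
        have hyx : 0 < y x := hpos x hxIcc
        have hineqx := hineq x hx.1.le hyx
        have hEpos : 0 < Real.exp (-B * a * x) := Real.exp_pos _
        have hpow : 0 < (y x) ^ (a - 1) := Real.rpow_pos_of_pos hyx _
        have key1 : (y x) ^ (p - 1) * (y x) ^ (a - 1) = 1 := by
          rw [← Real.rpow_add hyx]
          have h0 : p - 1 + (a - 1) = 0 := by rw [ha_def]; ring
          rw [h0, Real.rpow_zero]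
        have key2 : y x * (y x) ^ (a - 1) = (y x) ^ a := by
          nth_rewrite 1 [← Real.rpow_one (y x)]
          rw [← Real.rpow_add hyx]; ring_nf
        have hψx : 0 ≤ ψ x := hψpos x hx.1.le
        have hmul : deriv y x * a * (y x) ^ (a - 1)
            ≤ (-2 * Cm * ψ x * (y x) ^ (p - 1) + B * y x) * a * (y x) ^ (a - 1) := by
          have := mul_le_mul_of_nonneg_right
            (mul_le_mul_of_nonneg_right hineqx ha.le) hpow.le
          linarith
        have hrw : (-2 * Cm * ψ x * (y x) ^ (p - 1) + B * y x) * a * (y x) ^ (a - 1)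
            = -(c * ψ x) + B * a * (y x) ^ a := by
          rw [hc_def]
          linear_combination (-2 * Cm * a * ψ x) * key1 + (B * a) * key2
        have : deriv y x * a * (y x) ^ (a - 1) ≤ -(c * ψ x) + B * a * (y x) ^ a := by
          linarith
        have hphix : φ x = ψ x * Real.exp (-B * a * x) := rfl
        rw [hphix]
        nlinarith [mul_le_mul_of_nonneg_right this hEpos.le]
    have hg0 : g 0 = (y 0) ^ a := by
      simp [hg_def]
    have hgT : c * ∫ s in (0:ℝ)..T, φ s ≤ g T := by
      have hyT : (0:ℝ) ≤ y T := hynn T (le_trans zero_le_one hT2)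
      have : 0 ≤ (y T) ^ a * Real.exp (-B * a * T) :=
        mul_nonneg (Real.rpow_nonneg hyT a) (Real.exp_pos _).le
      simp only [hg_def]; linarith
    have h0T : (0:ℝ) ≤ T := le_trans zero_le_one hT2
    have := hanti (Set.left_mem_Icc.mpr h0T) (Set.right_mem_Icc.mpr h0T) h0T
    rw [hg0] at this
    linarith
  obtain ⟨t, ht, hyt⟩ := hex
  exact ⟨T, lt_of_lt_of_le one_pos hT2,
    fun s hs => hstay t ht.1 hyt s (ht.2.trans hs)⟩
end

section
/- Let v : [0, ∞) → ℝ be continuously differentiable and satisfy v'(t) ≤ b |v(t)|^{q−2} v(t) ((a/b) − |v(t)|^{r−q}) for all t ≥ 0, where a, b > 0 and 1 < q < r. If v(T) ≤ (a/b)^{1/(r−q)} for some T ≥ 0, then v(t) ≤ (a/b)^{1/(r−q)} for all t ≥ T. -/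
theorem stmt_5 (a b q r : ℝ) (ha : 0 < a) (hb : 0 < b) (hq : 1 < q) (hqr : q < r)
    (v : ℝ → ℝ) (hv : ContDiff ℝ 1 v)
    (hineq : ∀ t, 0 ≤ t →
      deriv v t ≤ b * (|v t| ^ (q - 2) * v t) * (a / b - |v t| ^ (r - q)))
    (T : ℝ) (hT : 0 ≤ T) (hvT : v T ≤ (a / b) ^ (1 / (r - q))) :
    ∀ t, T ≤ t → v t ≤ (a / b) ^ (1 / (r - q)) := by
  set M : ℝ := (a / b) ^ (1 / (r - q)) with hMdef
  have hab : 0 < a / b := div_pos ha hb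
  have hrq : (0:ℝ) < r - q := sub_pos.mpr hqr
  have hM0 : 0 < M := Real.rpow_pos_of_pos hab _
  have hMrq : M ^ (r - q) = a / b := by
    rw [hMdef, ← Real.rpow_mul hab.le, one_div_mul_cancel (ne_of_gt hrq), Real.rpow_one]
  by_contra hcon
  push_neg at hcon
  obtain ⟨t₁, ht₁T, ht₁⟩ := hcon
  -- the set of times in [T, t₁] where v ≤ M
  set S : Set ℝ := {t | t ∈ Set.Icc T t₁ ∧ v t ≤ M} with hSdef
  have hScl : IsClosed S := by
    have : S = Set.Icc T t₁ ∩ v ⁻¹' Set.Iic M := by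
      ext x; simp [hSdef, Set.mem_Icc, and_assoc]
    rw [this]
    exact isClosed_Icc.inter (isClosed_Iic.preimage hv.continuous)
  have hSne : S.Nonempty := ⟨T, ⟨le_refl T, ht₁T⟩, hvT⟩
  have hSbdd : BddAbove S := ⟨t₁, fun x hx => hx.1.2⟩
  set s := sSup S with hsdef
  have hsS : s ∈ S := hScl.csSup_mem hSne hSbdd
  have hsT : T ≤ s := hsS.1.1
  have hst₁ : s ≤ t₁ := hsS.1.2
  have hvs : v s ≤ M := hsS.2
  have hslt : s < t₁ := lt_of_le_of_ne hst₁ fun h => absurd hvs (by rw [h]; exact not_le.mpr ht₁)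
  -- on (s, t₁], v > M
  have hgt : ∀ t ∈ Set.Ioc s t₁, M < v t := by
    intro t ht
    by_contra h
    push_neg at h
    have : t ∈ S := ⟨⟨hsT.trans ht.1.le, ht.2⟩, h⟩
    exact absurd (le_csSup hSbdd this) (not_le.mpr ht.1)
  -- v is antitone on [s, t₁]
  have hanti : AntitoneOn v (Set.Icc s t₁) := by
    apply antitoneOn_of_deriv_nonpos (convex_Icc s t₁) hv.continuous.continuousOn
      ((hv.differentiable one_ne_zero).differentiableOn)
    intro x hx
    rw [interior_Icc] at hx
    have hxM : M < v x := hgt x ⟨hx.1, hx.2.le⟩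
    have hx0 : 0 ≤ x := hT.trans (hsT.trans hx.1.le)
    have hvx0 : 0 < v x := hM0.trans hxM
    have habs : |v x| = v x := abs_of_pos hvx0
    have h1 : 0 < b * (|v x| ^ (q - 2) * v x) :=
      mul_pos hb (mul_pos (Real.rpow_pos_of_pos (abs_pos.mpr hvx0.ne') _) hvx0)
    have h2 : a / b - |v x| ^ (r - q) < 0 := by
      rw [habs, sub_neg, ← hMrq]
      exact Real.rpow_lt_rpow hM0.le hxM hrq
    exact (hineq x hx0).trans (mul_nonpos_of_nonneg_of_nonpos h1.le h2.le)
  have : v t₁ ≤ v s :=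
    hanti ⟨le_refl s, hst₁⟩ ⟨hst₁, le_refl t₁⟩ hst₁
  exact absurd (this.trans hvs) (not_le.mpr ht₁)
end

section
/- Let v : [0, ∞) → ℝ be continuously differentiable and satisfy v'(t) ≥ b |v(t)|^{q−2} v(t) ((a/b) − |v(t)|^{r−q}) for all t ≥ 0, where a, b > 0 and 1 < q < r. If v(T) ≥ (a/b)^{1/(r−q)} for some T ≥ 0, then v(t) ≥ (a/b)^{1/(r−q)} for all t ≥ T. -/
theorem stmt_6 (a b q r : ℝ) (ha : 0 < a) (hb : 0 < b) (hq : 1 < q) (hqr : q < r)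
    (v : ℝ → ℝ) (hv : ContDiff ℝ 1 v)
    (hineq : ∀ t, 0 ≤ t →
      deriv v t ≥ b * (|v t| ^ (q - 2) * v t) * (a / b - |v t| ^ (r - q)))
    (T : ℝ) (hT : 0 ≤ T) (hvT : v T ≥ (a / b) ^ (1 / (r - q))) :
    ∀ t, T ≤ t → v t ≥ (a / b) ^ (1 / (r - q)) := by
  set c : ℝ := (a / b) ^ (1 / (r - q)) with hcdef
  have hab : 0 < a / b := div_pos ha hb
  have hc : 0 < c := Real.rpow_pos_of_pos hab _
  have hrq : 0 < r - q := sub_pos.mpr hqr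
  have hcpow : c ^ (r - q) = a / b := by
    rw [hcdef, ← Real.rpow_mul hab.le, one_div, inv_mul_cancel₀ hrq.ne', Real.rpow_one]
  -- positivity of the right-hand side on (0, c)
  have hf : ∀ x : ℝ, 0 < x → x < c →
      0 < b * (|x| ^ (q - 2) * x) * (a / b - |x| ^ (r - q)) := by
    intro x hx hxc
    rw [abs_of_pos hx]
    have h1 : 0 < x ^ (q - 2) * x := mul_pos (Real.rpow_pos_of_pos hx _) hx
    have h2 : x ^ (r - q) < a / b := by
      rw [← hcpow]
      exact Real.rpow_lt_rpow hx.le hxc hrq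
    exact mul_pos (mul_pos hb h1) (sub_pos.mpr h2)
  have hvc : Continuous v := hv.continuous
  intro t ht
  by_contra hvt
  push_neg at hvt
  -- τ : last time in [T,t] with v ≥ c
  set S : Set ℝ := {s ∈ Set.Icc T t | c ≤ v s} with hS
  have hSne : S.Nonempty := ⟨T, ⟨le_refl T, ht⟩, hvT⟩
  have hSclosed : IsClosed S :=
    (isClosed_Icc).inter (isClosed_le continuous_const hvc)
  have hSbdd : BddAbove S := ⟨t, fun s hs => hs.1.2⟩
  set τ := sSup S with hτdef
  have hτS : τ ∈ S := hSclosed.csSup_mem hSne hSbdd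
  have hτIcc : τ ∈ Set.Icc T t := hτS.1
  have hvτ : c ≤ v τ := hτS.2
  have hτlt : ∀ s, τ < s → s ≤ t → v s < c := by
    intro s hs hst
    by_contra h
    push_neg at h
    have : s ∈ S := ⟨⟨hτIcc.1.trans hs.le, hst⟩, h⟩
    exact absurd (le_csSup hSbdd this) (not_le.mpr hs)
  -- σ : first time after τ where v drops to c/2 (or t)
  set K : Set ℝ := {s ∈ Set.Icc τ t | v s ≤ c / 2} ∪ {t} with hK
  have hKne : K.Nonempty := ⟨t, Or.inr rfl⟩
  have hKclosed : IsClosed K :=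
    ((isClosed_Icc).inter (isClosed_le hvc continuous_const)).union isClosed_singleton
  have hKbdd : BddBelow K := ⟨τ, by
    rintro s (⟨hs, _⟩ | rfl)
    · exact hs.1
    · exact hτIcc.2⟩
  set σ := sInf K with hσdef
  have hσK : σ ∈ K := hKclosed.csInf_mem hKne hKbdd
  have hσle : σ ≤ t := csInf_le hKbdd (Or.inr rfl)
  have hτσ : τ ≤ σ := le_csInf hKne (by
    rintro s (⟨hs, _⟩ | rfl)
    · exact hs.1
    · exact hτIcc.2)
  have hvσ : v σ < c := by
    rcases hσK with ⟨_, h⟩ | h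
    · linarith
    · rw [Set.mem_singleton_iff] at h; rw [h]; exact hvt
  have hτσlt : τ < σ := lt_of_le_of_ne hτσ (by intro h; rw [h] at hvτ; linarith)
  -- on (τ, σ), c/2 < v s < c
  have hmid : ∀ s, τ < s → s < σ → c / 2 < v s ∧ v s < c := by
    intro s hs hsσ
    have hst : s ≤ t := hsσ.le.trans hσle
    refine ⟨?_, hτlt s hs hst⟩
    by_contra h
    push_neg at h
    have : s ∈ K := Or.inl ⟨⟨hs.le, hst⟩, h⟩
    exact absurd (csInf_le hKbdd this) (not_le.mpr hsσ)
  -- deriv v > 0 on interior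
  have hderiv : ∀ s ∈ interior (Set.Icc τ σ), 0 < deriv v s := by
    intro s hs
    rw [interior_Icc] at hs
    obtain ⟨h1, h2⟩ := hmid s hs.1 hs.2
    have hs0 : 0 ≤ s := hT.trans (hτIcc.1.trans hs.1.le)
    have hvs : 0 < v s := lt_trans (by linarith) h1
    calc 0 < b * (|v s| ^ (q - 2) * v s) * (a / b - |v s| ^ (r - q)) := hf _ hvs h2
      _ ≤ deriv v s := hineq s hs0
  have hmono : StrictMonoOn v (Set.Icc τ σ) :=
    strictMonoOn_of_deriv_pos (convex_Icc _ _) (hvc.continuousOn) hderiv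
  have := hmono (Set.left_mem_Icc.mpr hτσlt.le) (Set.right_mem_Icc.mpr hτσlt.le) hτσlt
  linarith
end

section
/- Let v : [0, ∞) → ℝ be continuously differentiable with v'(t) ≤ b v(t)^{q−1} ((a/b) − v(t)^{r−q}) whenever v(t) > 0, where a, b > 0 and 1 < q < r. Then lim sup_{t→∞} v(t) ≤ (a/b)^{1/(r−q)}. -/
open Filter Real Set

/-- Barrier lemma: if a C¹ function has derivative ≤ -δ whenever it is ≥ K (for t ≥ 0),
then eventually it is ≤ K. -/
lemma barrier_lemma (v : ℝ → ℝ) (hv : ContDiff ℝ 1 v) (K δ : ℝ) (hδ : 0 < δ)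
    (h : ∀ t, 0 ≤ t → K ≤ v t → deriv v t ≤ -δ) :
    ∀ᶠ t in atTop, v t ≤ K := by
  have hdiff : Differentiable ℝ v := hv.differentiable one_ne_zero
  have hcont : Continuous v := hdiff.continuous
  -- Step 1: there is t₀ ≥ 0 with v t₀ ≤ K
  have step1 : ∃ t₀, 0 ≤ t₀ ∧ v t₀ ≤ K := by
    by_contra hex
    push_neg at hex
    have hall : ∀ t, 0 ≤ t → K < v t := fun t ht => hex t ht
    have hder : ∀ t, 0 ≤ t → deriv v t ≤ -δ := fun t ht => h t ht (hall t ht).le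
    set g : ℝ → ℝ := fun t => v t + δ * t with hg
    have hgd : ∀ t, HasDerivAt g (deriv v t + δ) t := by
      intro t
      have h1 : HasDerivAt v (deriv v t) t := (hdiff t).hasDerivAt
      have h2 : HasDerivAt (fun x : ℝ => δ * x) (δ * 1) t := (hasDerivAt_id t).const_mul δ
      have h3 := h1.add h2
      rw [mul_one] at h3
      exact h3
    have hanti : AntitoneOn g (Ici (0:ℝ)) := by
      apply antitoneOn_of_deriv_nonpos (convex_Ici 0)
      · exact (hcont.add (continuous_const.mul continuous_id)).continuousOn
      · intro x hx
        exact ((hgd x).differentiableAt).differentiableWithinAt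
      · intro x hx
        rw [interior_Ici] at hx
        rw [(hgd x).deriv]
        have := hder x (le_of_lt hx)
        linarith
    have hv0 : K < v 0 := hall 0 le_rfl
    have hq' : 0 < (v 0 - K) / δ := div_pos (by linarith) hδ
    have hT0 : (0:ℝ) ≤ (v 0 - K) / δ + 1 := by linarith
    have hle := hanti (self_mem_Ici) (mem_Ici.2 hT0) hT0
    have hdm : δ * ((v 0 - K) / δ) = v 0 - K := by field_simp
    have hle' : v ((v 0 - K) / δ + 1) + δ * ((v 0 - K) / δ + 1) ≤ v 0 := by
      simpa [hg] using hle
    have hKT : K < v ((v 0 - K) / δ + 1) := hall _ hT0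
    nlinarith
  obtain ⟨t₀, ht₀, hvt₀⟩ := step1
  -- Step 2: for all t ≥ t₀, v t ≤ K
  rw [eventually_atTop]
  refine ⟨t₀, fun t₁ ht₁ => ?_⟩
  by_contra hK
  push_neg at hK
  set S : Set ℝ := Icc t₀ t₁ ∩ {x | v x ≤ K} with hS
  have hSne : S.Nonempty := ⟨t₀, ⟨le_rfl, ht₁⟩, hvt₀⟩
  have hSbdd : BddAbove S := ⟨t₁, fun x hx => hx.1.2⟩
  have hSclosed : IsClosed S := isClosed_Icc.inter (isClosed_le hcont continuous_const)
  set s := sSup S with hs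
  have hsS : s ∈ S := hSclosed.csSup_mem hSne hSbdd
  have hst₁ : s ≤ t₁ := hsS.1.2
  have ht₀s : t₀ ≤ s := hsS.1.1
  have hgt : ∀ x ∈ Ioc s t₁, K < v x := by
    intro x hx
    by_contra hle
    push_neg at hle
    have : x ∈ S := ⟨⟨le_trans ht₀s hx.1.le, hx.2⟩, hle⟩
    exact absurd (le_csSup hSbdd this) (not_le.2 hx.1)
  have hanti : AntitoneOn v (Icc s t₁) := by
    apply antitoneOn_of_deriv_nonpos (convex_Icc s t₁) hcont.continuousOn
    · exact fun x _ => (hdiff x).differentiableWithinAt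
    · intro x hx
      rw [interior_Icc] at hx
      have hx0 : 0 ≤ x := le_trans ht₀ (le_trans ht₀s hx.1.le)
      have := h x hx0 (hgt x ⟨hx.1, hx.2.le⟩).le
      linarith
  have := hanti ⟨le_rfl, hst₁⟩ ⟨hst₁, le_rfl⟩ hst₁
  exact absurd (le_trans this hsS.2) (not_le.2 hK)

theorem stmt_7 (a b q r : ℝ) (ha : 0 < a) (hb : 0 < b) (hq : 1 < q) (hqr : q < r)
    (v : ℝ → ℝ) (hv : ContDiff ℝ 1 v)
    (hineq : ∀ t, 0 ≤ t → 0 < v t →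
      deriv v t ≤ b * (v t) ^ (q - 1) * (a / b - (v t) ^ (r - q))) :
    Filter.limsup v Filter.atTop ≤ (a / b) ^ (1 / (r - q)) := by
  have hab : 0 < a / b := div_pos ha hb
  have hrq : 0 < r - q := sub_pos.2 hqr
  set C : ℝ := (a / b) ^ (1 / (r - q)) with hC
  have hC0 : 0 < C := Real.rpow_pos_of_pos hab _
  have hCrq : C ^ (r - q) = a / b := by
    rw [hC, ← Real.rpow_mul hab.le, one_div, inv_mul_cancel₀ hrq.ne', Real.rpow_one]
  have key : ∀ ε : ℝ, 0 < ε → ∀ᶠ t in atTop, v t ≤ C + ε := by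
    intro ε hε
    have hKpos : 0 < C + ε := by linarith
    have hKpow : a / b < (C + ε) ^ (r - q) := by
      rw [← hCrq]
      exact Real.rpow_lt_rpow hC0.le (by linarith) hrq
    set δ : ℝ := b * (C + ε) ^ (q - 1) * ((C + ε) ^ (r - q) - a / b) with hδdef
    have hq1 : 0 < (C + ε) ^ (q - 1) := Real.rpow_pos_of_pos hKpos _
    have hδ : 0 < δ := by
      apply mul_pos (mul_pos hb hq1)
      linarith
    apply barrier_lemma v hv (C + ε) δ hδ
    intro t ht hKv
    have hvt : 0 < v t := lt_of_lt_of_le hKpos hKv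
    have h1 := hineq t ht hvt
    have h2 : (C + ε) ^ (q - 1) ≤ (v t) ^ (q - 1) :=
      Real.rpow_le_rpow hKpos.le hKv (by linarith)
    have h3 : (C + ε) ^ (r - q) ≤ (v t) ^ (r - q) :=
      Real.rpow_le_rpow hKpos.le hKv hrq.le
    have hfac : a / b - (v t) ^ (r - q) ≤ a / b - (C + ε) ^ (r - q) := by linarith
    have hfacneg : a / b - (C + ε) ^ (r - q) < 0 := by linarith
    have hvq1 : 0 < (v t) ^ (q - 1) := Real.rpow_pos_of_pos hvt _
    have : b * (v t) ^ (q - 1) * (a / b - (v t) ^ (r - q)) ≤ -δ := by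
      rw [hδdef]
      have h4 : b * (v t) ^ (q - 1) * (a / b - (v t) ^ (r - q)) ≤
          b * (v t) ^ (q - 1) * (a / b - (C + ε) ^ (r - q)) :=
        mul_le_mul_of_nonneg_left hfac (mul_pos hb hvq1).le
      have h5 : (v t) ^ (q - 1) * (a / b - (C + ε) ^ (r - q)) ≤
          (C + ε) ^ (q - 1) * (a / b - (C + ε) ^ (r - q)) :=
        mul_le_mul_of_nonpos_right h2 hfacneg.le
      nlinarith [h4, mul_le_mul_of_nonneg_left h5 hb.le]
    linarith
  rw [Filter.limsup_eq]
  by_cases hbd : BddBelow {x | ∀ᶠ t in atTop, v t ≤ x}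
  · refine le_of_forall_pos_le_add fun ε hε => csInf_le hbd ?_
    exact key ε hε
  · rw [Real.sInf_of_not_bddBelow hbd]
    exact hC0.le
end

section
/- Let a, b > 0, 1 < q < r, set C := (a/b)^{1/(r−q)}, and let v : [T, ∞) → ℝ be continuously differentiable with v(t) > C for all t ≥ T and v'(t) ≤ −b v(t)^{q−1} (v(t)^{r−q} − C^{r−q}) for all t ≥ T. Then for all t ≥ T, |v(t) − C| ≤ |v(T) − C| exp(−b (r−q) C^{q−1} ξ₀ (t − T)), where ξ₀ = C^{r−q−1} if r − q ≥ 1 and ξ₀ = v(T)^{r−q−1} if r − q < 1. -/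
theorem stmt_8 (a b q r T : ℝ) (ha : 0 < a) (hb : 0 < b) (hq : 1 < q) (hqr : q < r)
    (v : ℝ → ℝ) (hv : ContDiff ℝ 1 v)
    (C : ℝ) (hC : C = (a / b) ^ (1 / (r - q)))
    (hvC : ∀ t, T ≤ t → C < v t)
    (hineq : ∀ t, T ≤ t →
      deriv v t ≤ -b * (v t) ^ (q - 1) * ((v t) ^ (r - q) - C ^ (r - q)))
    (ξ₀ : ℝ) (hξ₀ : ξ₀ = if 1 ≤ r - q then C ^ (r - q - 1) else (v T) ^ (r - q - 1)) :
    ∀ t, T ≤ t →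
      |v t - C| ≤ |v T - C| * Real.exp (-b * (r - q) * C ^ (q - 1) * ξ₀ * (t - T)) := by
  have hC0 : 0 < C := by
    rw [hC]; exact Real.rpow_pos_of_pos (div_pos ha hb) _
  have hs : 0 < r - q := by linarith
  have hvpos : ∀ t, T ≤ t → 0 < v t := fun t ht => lt_trans hC0 (hvC t ht)
  have hvdiff : Differentiable ℝ v := hv.differentiable one_ne_zero
  -- v is antitone on [T, ∞)
  have hderiv_nonpos : ∀ t, T ≤ t → deriv v t ≤ 0 := by
    intro t ht
    have h1 : 0 < (v t) ^ (q - 1) := Real.rpow_pos_of_pos (hvpos t ht) _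
    have h2 : C ^ (r - q) ≤ (v t) ^ (r - q) :=
      Real.rpow_le_rpow hC0.le (hvC t ht).le hs.le
    have h3 := hineq t ht
    have h4 : 0 ≤ b * (v t ^ (q - 1)) * ((v t) ^ (r - q) - C ^ (r - q)) :=
      mul_nonneg (mul_nonneg hb.le h1.le) (sub_nonneg.mpr h2)
    nlinarith [h3, h4]
  have hanti : AntitoneOn v (Set.Ici T) := by
    apply antitoneOn_of_deriv_nonpos (convex_Ici T) hv.continuous.continuousOn
      (fun x _ => (hvdiff x).differentiableWithinAt)
    intro x hx
    rw [interior_Ici] at hx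
    exact hderiv_nonpos x (le_of_lt hx)
  have hξpos : 0 < ξ₀ := by
    rw [hξ₀]; split
    · exact Real.rpow_pos_of_pos hC0 _
    · exact Real.rpow_pos_of_pos (hvpos T le_rfl) _
  -- key mean value estimate
  have key : ∀ t, T ≤ t → (r - q) * ξ₀ * (v t - C) ≤ (v t) ^ (r - q) - C ^ (r - q) := by
    intro t ht
    have hab : C < v t := hvC t ht
    have hmvt := exists_hasDerivAt_eq_slope (fun x => x ^ (r - q))
      (fun x => (r - q) * x ^ (r - q - 1)) hab
      (fun x hx => by
        have hx0 : (0:ℝ) < x := lt_of_lt_of_le hC0 hx.1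
        exact (Real.hasDerivAt_rpow_const (Or.inl hx0.ne')).continuousAt.continuousWithinAt)
      (fun x hx => by
        have hx0 : (0:ℝ) < x := lt_trans hC0 hx.1
        exact Real.hasDerivAt_rpow_const (Or.inl hx0.ne'))
    obtain ⟨c, hc, hceq⟩ := hmvt
    have hc0 : 0 < c := lt_trans hC0 hc.1
    have hceq' : (r - q) * c ^ (r - q - 1) = ((v t) ^ (r - q) - C ^ (r - q)) / (v t - C) := hceq
    rw [eq_div_iff (sub_pos.mpr hab).ne'] at hceq'
    have hslope : (v t) ^ (r - q) - C ^ (r - q) = (r - q) * c ^ (r - q - 1) * (v t - C) := by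
      linarith [hceq']
    have hξc : ξ₀ ≤ c ^ (r - q - 1) := by
      rw [hξ₀]; split
      · rename_i h1
        exact Real.rpow_le_rpow hC0.le hc.1.le (by linarith)
      · rename_i h1
        have hcv : c ≤ v T := le_trans hc.2.le (hanti Set.self_mem_Ici ht ht)
        exact Real.rpow_le_rpow_of_nonpos hc0 hcv (by linarith)
    rw [hslope]
    have hvc : 0 < v t - C := by linarith
    exact mul_le_mul_of_nonneg_right (mul_le_mul_of_nonneg_left hξc hs.le) hvc.le
  set lam : ℝ := b * (r - q) * C ^ (q - 1) * ξ₀ with hlam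
  have hderiv_bound : ∀ t, T ≤ t → deriv v t ≤ -lam * (v t - C) := by
    intro t ht
    have h1 : C ^ (q - 1) ≤ (v t) ^ (q - 1) :=
      Real.rpow_le_rpow hC0.le (hvC t ht).le (by linarith)
    have h1' : 0 < C ^ (q - 1) := Real.rpow_pos_of_pos hC0 _
    have h2 := key t ht
    have h3 := hineq t ht
    have hvc : 0 < v t - C := by linarith [hvC t ht]
    have h4 : 0 ≤ (r - q) * ξ₀ * (v t - C) := by positivity
    have h5 : b * C ^ (q - 1) * ((r - q) * ξ₀ * (v t - C)) ≤
        b * (v t) ^ (q - 1) * ((v t) ^ (r - q) - C ^ (r - q)) :=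
      mul_le_mul (mul_le_mul_of_nonneg_left h1 hb.le) h2 h4
        (mul_nonneg hb.le (Real.rpow_pos_of_pos (hvpos t ht) _).le)
    rw [hlam]
    nlinarith [h3, h5]
  -- Gronwall via auxiliary function g
  set g : ℝ → ℝ := fun t => (v t - C) * Real.exp (lam * (t - T)) with hg
  have hgderiv : ∀ t, HasDerivAt g
      (deriv v t * Real.exp (lam * (t - T)) + (v t - C) * (Real.exp (lam * (t - T)) * lam)) t := by
    intro t
    have h1 : HasDerivAt (fun t => v t - C) (deriv v t) t :=
      ((hvdiff t).hasDerivAt).sub_const C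
    have h2 : HasDerivAt (fun t : ℝ => lam * (t - T)) lam t := by
      simpa using (((hasDerivAt_id t).sub_const T).const_mul lam)
    exact h1.mul h2.exp
  have hganti : AntitoneOn g (Set.Ici T) := by
    apply antitoneOn_of_deriv_nonpos (convex_Ici T)
      (fun x _ => (hgderiv x).continuousAt.continuousWithinAt)
      (fun x _ => ((hgderiv x).differentiableAt).differentiableWithinAt)
    intro x hx
    rw [interior_Ici] at hx
    have hx' : T ≤ x := hx.le
    rw [(hgderiv x).deriv]
    have hexp : 0 < Real.exp (lam * (x - T)) := Real.exp_pos _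
    have hd := hderiv_bound x hx'
    have hvc : 0 < v x - C := by linarith [hvC x hx']
    nlinarith
  intro t ht
  have hgle : g t ≤ g T := hganti Set.self_mem_Ici ht ht
  have hgt : g T = v T - C := by simp [hg]
  have hvct : 0 < v t - C := by linarith [hvC t ht]
  have hvcT : 0 < v T - C := by linarith [hvC T le_rfl]
  rw [abs_of_pos hvct, abs_of_pos hvcT]
  have hexp : 0 < Real.exp (lam * (t - T)) := Real.exp_pos _
  have : (v t - C) * Real.exp (lam * (t - T)) ≤ v T - C := by
    rw [← hgt]; exact hgle
  have hrw : -b * (r - q) * C ^ (q - 1) * ξ₀ * (t - T) = -(lam * (t - T)) := by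
    rw [hlam]; ring
  rw [hrw, Real.exp_neg, ← div_eq_mul_inv, le_div_iff₀ hexp]
  exact this
end

section
/- Let a, b > 0, 1 < q < r, set C := (a/b)^{1/(r−q)}, and let v : [T, ∞) → ℝ be continuously differentiable with 0 < v(t) < C for all t ≥ T and v'(t) ≥ b v(t)^{q−1} (C^{r−q} − v(t)^{r−q}) for all t ≥ T. Then for all t ≥ T, |v(t) − C| ≤ |v(T) − C| exp(−b (r−q) v(T)^{q−1} ξ₁ (t − T)), where ξ₁ = v(T)^{r−q−1} if r − q ≥ 1 and ξ₁ = C^{r−q−1} if r − q < 1. -/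
open Real Set

/-- Key pointwise inequality: `s * ξ * (C - x) ≤ C ^ s - x ^ s` for `0 < vT ≤ x ≤ C`. -/
lemma key_ineq (s ξ C vT x : ℝ) (hs : 0 < s) (hvT : 0 < vT) (hx : vT ≤ x) (hxC : x ≤ C)
    (hξ : ξ = if 1 ≤ s then vT ^ (s - 1) else C ^ (s - 1)) :
    s * ξ * (C - x) ≤ C ^ s - x ^ s := by
  have hx0 : 0 < x := lt_of_lt_of_le hvT hx
  have hC0 : 0 < C := lt_of_lt_of_le hx0 hxC
  by_cases h1 : 1 ≤ s
  · rw [hξ, if_pos h1]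
    have hz : (-1 : ℝ) ≤ (C - x) / x := le_trans (by norm_num) (div_nonneg (by linarith) hx0.le)
    have hber := one_add_mul_self_le_rpow_one_add hz h1
    have h1z : 1 + (C - x) / x = C / x := by field_simp; ring
    rw [h1z, Real.div_rpow hC0.le hx0.le] at hber
    have hxs : (0 : ℝ) < x ^ s := Real.rpow_pos_of_pos hx0 s
    have hb2 : (1 + s * ((C - x) / x)) * x ^ s ≤ C ^ s := (le_div_iff₀ hxs).mp hber
    have hxs1 : x ^ (s - 1) = x ^ s / x := Real.rpow_sub_one hx0.ne' s
    have expand : (1 + s * ((C - x) / x)) * x ^ s = x ^ s + s * x ^ (s - 1) * (C - x) := by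
      rw [hxs1]; field_simp
    rw [expand] at hb2
    have hmono : vT ^ (s - 1) ≤ x ^ (s - 1) := Real.rpow_le_rpow hvT.le hx (by linarith)
    have hstep : s * vT ^ (s - 1) * (C - x) ≤ s * x ^ (s - 1) * (C - x) :=
      mul_le_mul_of_nonneg_right (mul_le_mul_of_nonneg_left hmono hs.le) (by linarith)
    linarith
  · rw [hξ, if_neg h1]
    push_neg at h1
    have hz : (-1 : ℝ) ≤ (x - C) / C := by
      rw [neg_le, ← neg_div, neg_sub]
      rw [div_le_one hC0]
      linarith
    have hb := rpow_one_add_le_one_add_mul_self hz hs.le h1.le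
    have h1z : 1 + (x - C) / C = x / C := by field_simp; ring
    rw [h1z, Real.div_rpow hx0.le hC0.le] at hb
    -- hb : x ^ s / C ^ s ≤ 1 + s * ((x - C) / C)
    have hCs : (0 : ℝ) < C ^ s := Real.rpow_pos_of_pos hC0 s
    have hb2 : x ^ s ≤ (1 + s * ((x - C) / C)) * C ^ s := by
      rw [← div_le_iff₀ hCs] at *
      exact hb
    have hCs1 : C ^ (s - 1) = C ^ s / C := Real.rpow_sub_one hC0.ne' s
    have expand : (1 + s * ((x - C) / C)) * C ^ s = C ^ s + s * C ^ (s - 1) * (x - C) := by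
      rw [hCs1]; field_simp
    rw [expand] at hb2
    linarith

theorem stmt_9 (a b q r T : ℝ) (ha : 0 < a) (hb : 0 < b) (hq : 1 < q) (hqr : q < r)
    (v : ℝ → ℝ) (hv : ContDiff ℝ 1 v)
    (C : ℝ) (hC : C = (a / b) ^ (1 / (r - q)))
    (hvC : ∀ t, T ≤ t → 0 < v t ∧ v t < C)
    (hineq : ∀ t, T ≤ t →
      deriv v t ≥ b * (v t) ^ (q - 1) * (C ^ (r - q) - (v t) ^ (r - q)))
    (ξ₁ : ℝ) (hξ₁ : ξ₁ = if 1 ≤ r - q then (v T) ^ (r - q - 1) else C ^ (r - q - 1)) :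
    ∀ t, T ≤ t →
      |v t - C| ≤ |v T - C| * Real.exp (-b * (r - q) * (v T) ^ (q - 1) * ξ₁ * (t - T)) := by
  have hs : 0 < r - q := by linarith
  have hvT : 0 < v T := (hvC T le_rfl).1
  have hvTC : v T < C := (hvC T le_rfl).2
  have hC0 : 0 < C := lt_trans hvT hvTC
  have hvd : Differentiable ℝ v := hv.differentiable one_ne_zero
  set l : ℝ := b * (r - q) * (v T) ^ (q - 1) * ξ₁ with hl
  have hξpos : 0 < ξ₁ := by
    rw [hξ₁]; split
    · exact Real.rpow_pos_of_pos hvT _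
    · exact Real.rpow_pos_of_pos hC0 _
  have hlpos : 0 < l := by
    have := Real.rpow_pos_of_pos hvT (q - 1)
    positivity
  -- v is monotone on Ici T
  have hvmono : MonotoneOn v (Ici T) := by
    apply monotoneOn_of_deriv_nonneg (convex_Ici T) hv.continuous.continuousOn
      (hvd.differentiableOn)
    intro x hx
    rw [interior_Ici] at hx
    have hxT : T ≤ x := le_of_lt hx
    have h1 := hineq x hxT
    have h2 : (v x) ^ (r - q) ≤ C ^ (r - q) :=
      Real.rpow_le_rpow (hvC x hxT).1.le (hvC x hxT).2.le hs.le
    have h3 : (0:ℝ) < (v x) ^ (q - 1) := Real.rpow_pos_of_pos (hvC x hxT).1 _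
    have h4 : 0 ≤ b * (v x) ^ (q - 1) * (C ^ (r - q) - (v x) ^ (r - q)) :=
      mul_nonneg (by positivity) (by linarith)
    linarith
  -- differential inequality: deriv v t ≥ l * (C - v t) for t ≥ T
  have hkey : ∀ x, T ≤ x → l * (C - v x) ≤ deriv v x := by
    intro x hxT
    have hvx := hvC x hxT
    have hvTx : v T ≤ v x := hvmono self_mem_Ici hxT hxT
    have hki := key_ineq (r - q) ξ₁ C (v T) (v x) hs hvT hvTx hvx.2.le hξ₁
    have hq1 : (v T) ^ (q - 1) ≤ (v x) ^ (q - 1) :=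
      Real.rpow_le_rpow hvT.le hvTx (by linarith)
    have hq1pos : (0:ℝ) < (v T) ^ (q - 1) := Real.rpow_pos_of_pos hvT _
    have hwnn : 0 ≤ C - v x := by linarith [hvx.2]
    have hcnn : 0 ≤ (r - q) * ξ₁ * (C - v x) := mul_nonneg (by positivity) hwnn
    have hstep : (b * (v T) ^ (q - 1)) * ((r - q) * ξ₁ * (C - v x)) ≤
        (b * (v x) ^ (q - 1)) * (C ^ (r - q) - (v x) ^ (r - q)) := by
      apply mul_le_mul _ hki hcnn _
      · exact mul_le_mul_of_nonneg_left hq1 hb.le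
      · exact mul_nonneg hb.le (Real.rpow_pos_of_pos hvx.1 _).le
    calc l * (C - v x) = (b * (v T) ^ (q - 1)) * ((r - q) * ξ₁ * (C - v x)) := by
          rw [hl]; ring
      _ ≤ (b * (v x) ^ (q - 1)) * (C ^ (r - q) - (v x) ^ (r - q)) := hstep
      _ = b * (v x) ^ (q - 1) * (C ^ (r - q) - (v x) ^ (r - q)) := by ring
      _ ≤ deriv v x := hineq x hxT
  -- the auxiliary function g
  set g : ℝ → ℝ := fun t => (C - v t) * Real.exp (l * (t - T)) with hg
  have hgd : ∀ x, HasDerivAt g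
      (-(deriv v x) * Real.exp (l * (x - T)) + (C - v x) * (Real.exp (l * (x - T)) * l)) x := by
    intro x
    have h1 : HasDerivAt (fun t => C - v t) (-(deriv v x)) x := (hvd x).hasDerivAt.const_sub C
    have h2 : HasDerivAt (fun t : ℝ => l * (t - T)) l x := by
      simpa using (((hasDerivAt_id x).sub_const T).const_mul l)
    exact h1.mul h2.exp
  have hganti : AntitoneOn g (Ici T) := by
    apply antitoneOn_of_deriv_nonpos (convex_Ici T)
    · exact fun x _ => ((hgd x).differentiableAt.continuousAt).continuousWithinAt
    · exact fun x _ => (hgd x).differentiableAt.differentiableWithinAt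
    · intro x hx
      rw [interior_Ici] at hx
      rw [(hgd x).deriv]
      have hkx := hkey x (le_of_lt hx)
      have hexp : (0:ℝ) < Real.exp (l * (x - T)) := Real.exp_pos _
      nlinarith
  intro t ht
  have hvt := hvC t ht
  have hvTt : v T ≤ v t := hvmono self_mem_Ici ht ht
  have hgle : g t ≤ g T := hganti self_mem_Ici ht ht
  have hgT : g T = C - v T := by simp [hg]
  have hexp : (0:ℝ) < Real.exp (l * (t - T)) := Real.exp_pos _
  have h5 : C - v t ≤ (C - v T) * Real.exp (-(l * (t - T))) := by
    rw [Real.exp_neg, ← div_eq_mul_inv, le_div_iff₀ hexp]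
    calc (C - v t) * Real.exp (l * (t - T)) = g t := rfl
      _ ≤ g T := hgle
      _ = C - v T := hgT
  have habs1 : |v t - C| = C - v t := by rw [abs_of_nonpos (by linarith [hvt.2])]; ring
  have habs2 : |v T - C| = C - v T := by rw [abs_of_nonpos (by linarith)]; ring
  have hexparg : -b * (r - q) * (v T) ^ (q - 1) * ξ₁ * (t - T) = -(l * (t - T)) := by
    rw [hl]; ring
  rw [habs1, habs2, hexparg]
  exact h5
end

section
/- Let ψ_R(s) = (1 + s²)^{−β/2} for β > 0, and let x_i, v_i : [0, ∞) → ℝ^d be differentiable with x_i' = v_i. Then for all i, j and t ≥ 0, ψ_R(‖x_j(t) − x_i(t)‖) ≥ [ ψ_R(‖x_j(0) − x_i(0)‖)^{−1/β} + ∫₀ᵗ ‖v_j(s) − v_i(s)‖ ds ]^{−β}. -/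
open RealInnerProductSpace

theorem stmt_10 (d : ℕ) (β : ℝ) (hβ : 0 < β)
    (x₁ x₂ v₁ v₂ : ℝ → EuclideanSpace ℝ (Fin d))
    (hx₁ : ∀ t, HasDerivAt x₁ (v₁ t) t) (hx₂ : ∀ t, HasDerivAt x₂ (v₂ t) t)
    (hv₁ : Continuous v₁) (hv₂ : Continuous v₂)
    (ψR : ℝ → ℝ) (hψR : ∀ s, ψR s = (1 + s ^ 2) ^ (-(β / 2))) :
    ∀ t, 0 ≤ t →
      ψR ‖x₂ t - x₁ t‖ ≥
        ((ψR ‖x₂ 0 - x₁ 0‖) ^ (-(1 / β)) +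
          ∫ s in (0 : ℝ)..t, ‖v₂ s - v₁ s‖) ^ (-β) := by
  intro t ht
  set y : ℝ → EuclideanSpace ℝ (Fin d) := fun s => x₂ s - x₁ s with hy_def
  set v : ℝ → EuclideanSpace ℝ (Fin d) := fun s => v₂ s - v₁ s with hv_def
  have hy : ∀ s, HasDerivAt y (v s) s := fun s => (hx₂ s).sub (hx₁ s)
  -- g s = 1 + ‖y s‖²
  set g : ℝ → ℝ := fun s => 1 + ‖y s‖ ^ 2 with hg_def
  have hgpos : ∀ s, 0 < g s := fun s => by positivity
  have hg : ∀ s, HasDerivAt g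
      (⟪y s, v s⟫ + ⟪v s, y s⟫) s := by
    intro s
    have h1 : HasDerivAt (fun u => ⟪y u, y u⟫)
        (⟪y s, v s⟫ + ⟪v s, y s⟫) s := (hy s).inner ℝ (hy s)
    have : g = fun u => 1 + ⟪y u, y u⟫ := by
      funext u; rw [hg_def, real_inner_self_eq_norm_sq]
    rw [this]
    simpa using (h1.const_add 1)
  -- f s = sqrt (g s)
  set f : ℝ → ℝ := fun s => Real.sqrt (g s) with hf_def
  have hfpos : ∀ s, 0 < f s := fun s => Real.sqrt_pos.2 (hgpos s)
  have hf : ∀ s, HasDerivAt f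
      ((1 / (2 * Real.sqrt (g s))) * (⟪y s, v s⟫ + ⟪v s, y s⟫)) s := by
    intro s
    exact (Real.hasDerivAt_sqrt (ne_of_gt (hgpos s))).comp s (hg s)
  have hf_bound : ∀ s,
      (1 / (2 * Real.sqrt (g s))) * (⟪y s, v s⟫ + ⟪v s, y s⟫) ≤ ‖v s‖ := by
    intro s
    have h1 : ⟪y s, v s⟫ + ⟪v s, y s⟫ ≤ 2 * (‖y s‖ * ‖v s‖) := by
      have a := real_inner_le_norm (y s) (v s)
      have b := real_inner_le_norm (v s) (y s)
      rw [mul_comm] at b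
      linarith
    have h2 : ‖y s‖ ≤ Real.sqrt (g s) := by
      rw [show ‖y s‖ = Real.sqrt (‖y s‖ ^ 2) from (Real.sqrt_sq (norm_nonneg _)).symm]
      exact Real.sqrt_le_sqrt (by simp [hg_def])
    have hsq : 0 < Real.sqrt (g s) := Real.sqrt_pos.2 (hgpos s)
    rw [div_mul_eq_mul_div, one_mul, div_le_iff₀ (by positivity)]
    calc ⟪y s, v s⟫ + ⟪v s, y s⟫ ≤ 2 * (‖y s‖ * ‖v s‖) := h1
      _ ≤ 2 * (Real.sqrt (g s) * ‖v s‖) := by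
          have : ‖y s‖ * ‖v s‖ ≤ Real.sqrt (g s) * ‖v s‖ :=
            mul_le_mul_of_nonneg_right h2 (norm_nonneg _)
          linarith
      _ = ‖v s‖ * (2 * Real.sqrt (g s)) := by ring
  -- F s = ∫₀ˢ ‖v‖
  have hvc : Continuous fun s => ‖v s‖ := ((hv₂.sub hv₁).norm)
  set F : ℝ → ℝ := fun u => ∫ s in (0:ℝ)..u, ‖v s‖ with hF_def
  have hF : ∀ s, HasDerivAt F (‖v s‖) s := fun s =>
    (hvc.integral_hasStrictDerivAt 0 s).hasDerivAt
  -- h = f - F is antitone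
  set h : ℝ → ℝ := fun s => f s - F s with hh_def
  have hh : ∀ s, HasDerivAt h
      ((1 / (2 * Real.sqrt (g s))) * (⟪y s, v s⟫ + ⟪v s, y s⟫) - ‖v s‖) s :=
    fun s => (hf s).sub (hF s)
  have hanti : Antitone h := by
    apply antitone_of_deriv_nonpos
    · exact fun s => ((hh s).differentiableAt)
    · intro s
      rw [(hh s).deriv]
      linarith [hf_bound s]
  have key : f t ≤ f 0 + F t := by
    have := hanti ht
    have hF0 : F 0 = 0 := by simp [hF_def]
    simp only [hh_def, hF0, sub_zero] at this
    linarith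
  -- rewrite ψR in terms of f
  have hψ_eq : ∀ s, ψR ‖y s‖ = (f s) ^ (-β) := by
    intro s
    rw [hψR]
    show (1 + ‖y s‖ ^ 2) ^ (-(β / 2)) = Real.sqrt (g s) ^ (-β)
    rw [Real.sqrt_eq_rpow, ← Real.rpow_mul (hgpos s).le]
    congr 1
    ring
  have hψ0 : (ψR ‖y 0‖) ^ (-(1 / β)) = f 0 := by
    rw [hψ_eq, ← Real.rpow_mul (hfpos 0).le]
    rw [show -β * -(1 / β) = 1 by field_simp]
    exact Real.rpow_one _
  show ψR ‖y t‖ ≥ ((ψR ‖y 0‖) ^ (-(1 / β)) + F t) ^ (-β)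
  rw [hψ_eq, hψ0]
  exact Real.rpow_le_rpow_of_nonpos (hfpos t) key (neg_nonpos.2 hβ.le)
end

section
/- Let ψ : [0,∞) → [0,∞), p > 1, and v ∈ ℝ^N with v_M = max_i v_i attained at index i₀ and v_m = min_i v_i attained at index i₁. Then (Δ_{p,ψ} v)_{i₀} − (Δ_{p,ψ} v)_{i₁} ≤ −2 ψ_min (v_M − v_m)^{p−1}, where ψ_min := min_{i,j} ψ(‖x_j − x_i‖) and Δ_{p,ψ} is the discrete p-Laplacian (Δ_{p,ψ} v)_i = Σ_j ψ(‖x_j − x_i‖)|v_j − v_i|^{p−2}(v_j − v_i). -/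
theorem stmt_14 (N d : ℕ) (hN : 2 ≤ N) (p : ℝ) (hp : 1 < p)
    (x : Fin N → EuclideanSpace ℝ (Fin d))
    (ψ : ℝ → ℝ) (hψ : ∀ s, 0 ≤ s → 0 ≤ ψ s)
    (v : Fin N → ℝ)
    (i₀ i₁ : Fin N) (hi₀ : ∀ j, v j ≤ v i₀) (hi₁ : ∀ j, v i₁ ≤ v j)
    (ψmin : ℝ) (hψmin0 : 0 ≤ ψmin) (hψmin : ∀ i j, ψmin ≤ ψ ‖x j - x i‖) :
    (∑ j, ψ ‖x j - x i₀‖ * (|v j - v i₀| ^ (p - 2) * (v j - v i₀))) -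
      (∑ j, ψ ‖x j - x i₁‖ * (|v j - v i₁| ^ (p - 2) * (v j - v i₁))) ≤
      -2 * ψmin * (v i₀ - v i₁) ^ (p - 1) := by
  classical
  have ha : 0 ≤ v i₀ - v i₁ := sub_nonneg.2 (hi₁ i₀)
  have hA : 0 ≤ (v i₀ - v i₁) ^ (p - 1) := Real.rpow_nonneg ha _
  have key2 : |v i₀ - v i₁| ^ (p - 2) * (v i₀ - v i₁) = (v i₀ - v i₁) ^ (p - 1) := by
    rcases eq_or_lt_of_le ha with h | h
    · rw [← h]
      simp [Real.zero_rpow (by intro hc; linarith : p - 1 ≠ 0)]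
    · rw [abs_of_pos h, ← Real.rpow_add_one (ne_of_gt h)]
      norm_num
      ring_nf
  have key1 : |v i₁ - v i₀| ^ (p - 2) * (v i₁ - v i₀) = -((v i₀ - v i₁) ^ (p - 1)) := by
    have h1 : v i₁ - v i₀ = -(v i₀ - v i₁) := by ring
    rw [h1, abs_neg, mul_neg, key2]
  have hψ1 : ψmin ≤ ψ ‖x i₁ - x i₀‖ := hψmin i₀ i₁
  have hψ2 : ψmin ≤ ψ ‖x i₀ - x i₁‖ := hψmin i₁ i₀
  have h1 : (∑ j, ψ ‖x j - x i₀‖ * (|v j - v i₀| ^ (p - 2) * (v j - v i₀))) ≤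
      ψ ‖x i₁ - x i₀‖ * (|v i₁ - v i₀| ^ (p - 2) * (v i₁ - v i₀)) := by
    rw [← Finset.add_sum_erase _ _ (Finset.mem_univ i₁)]
    have hrest : ∑ j ∈ Finset.univ.erase i₁,
        ψ ‖x j - x i₀‖ * (|v j - v i₀| ^ (p - 2) * (v j - v i₀)) ≤ 0 := by
      apply Finset.sum_nonpos
      intro j _
      exact mul_nonpos_of_nonneg_of_nonpos (hψ _ (norm_nonneg _))
        (mul_nonpos_of_nonneg_of_nonpos (Real.rpow_nonneg (abs_nonneg _) _)
          (sub_nonpos.2 (hi₀ j)))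
    linarith
  have h2 : ψ ‖x i₀ - x i₁‖ * (|v i₀ - v i₁| ^ (p - 2) * (v i₀ - v i₁)) ≤
      ∑ j, ψ ‖x j - x i₁‖ * (|v j - v i₁| ^ (p - 2) * (v j - v i₁)) := by
    rw [← Finset.add_sum_erase _ _ (Finset.mem_univ i₀)]
    have hrest : 0 ≤ ∑ j ∈ Finset.univ.erase i₀,
        ψ ‖x j - x i₁‖ * (|v j - v i₁| ^ (p - 2) * (v j - v i₁)) := by
      apply Finset.sum_nonneg
      intro j _
      exact mul_nonneg (hψ _ (norm_nonneg _))
        (mul_nonneg (Real.rpow_nonneg (abs_nonneg _) _) (sub_nonneg.2 (hi₁ j)))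
    linarith
  rw [key1] at h1
  rw [key2] at h2
  nlinarith [mul_le_mul_of_nonneg_right hψ1 hA, mul_le_mul_of_nonneg_right hψ2 hA]
end

section
/- Let a, b > 0 and 2 ≤ q < r, and let v : [0, ∞) → ℝ^d be continuously differentiable with ⟨v(t), v'(t)⟩ ≤ b ‖v(t)‖^q ((a/b) − ‖v(t)‖^{r−q}) for all t ≥ 0, and suppose ‖v(t)‖ > 0 for all t ≥ 0. Then: (i) if ‖v(T)‖ ≤ (a/b)^{1/(r−q)} for some T, then ‖v(t)‖ ≤ (a/b)^{1/(r−q)} for all t ≥ T; (ii) lim sup_{t→∞} ‖v(t)‖ ≤ (a/b)^{1/(r−q)}. -/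
open Filter

lemma aux_inv (f : ℝ → ℝ) (hf : Differentiable ℝ f) {c T : ℝ} (hT : f T ≤ c)
    (hd : ∀ u, T ≤ u → c < f u → deriv f u < 0) : ∀ t, T ≤ t → f t ≤ c := by
  intro t ht
  by_contra hct
  push_neg at hct
  have hTt : T < t := by
    rcases lt_or_eq_of_le ht with h | h
    · exact h
    · exact absurd hT (by rw [h]; exact not_le.2 hct)
  set S : Set ℝ := Set.Icc T t ∩ f ⁻¹' Set.Iic c with hS
  have hSne : S.Nonempty := ⟨T, ⟨le_refl T, ht⟩, hT⟩
  have hSbdd : BddAbove S := ⟨t, fun x hx => hx.1.2⟩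
  have hScl : IsClosed S :=
    (isClosed_Icc).inter (isClosed_Iic.preimage hf.continuous)
  set s := sSup S with hs
  have hsmem : s ∈ S := hScl.csSup_mem hSne hSbdd
  have hfs : f s ≤ c := hsmem.2
  have hst : s < t := lt_of_le_of_ne hsmem.1.2 (fun h => absurd (h ▸ hfs) (not_le.2 hct))
  have hTs : T ≤ s := hsmem.1.1
  have hkey : ∀ u ∈ Set.Ioo s t, c < f u := by
    intro u hu
    by_contra hcu
    push_neg at hcu
    have : u ∈ S := ⟨⟨hTs.trans hu.1.le, hu.2.le⟩, hcu⟩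
    exact absurd (le_csSup hSbdd this) (not_le.2 hu.1)
  have hanti : StrictAntiOn f (Set.Icc s t) := by
    apply strictAntiOn_of_deriv_neg (convex_Icc s t) hf.continuous.continuousOn
    intro u hu
    rw [interior_Icc] at hu
    exact hd u (hTs.trans hu.1.le) (hkey u hu)
  have := hanti (Set.left_mem_Icc.2 hst.le) (Set.right_mem_Icc.2 hst.le) hst
  linarith

lemma aux_decay (f : ℝ → ℝ) (hf : Differentiable ℝ f) {ε : ℝ} (hε : 0 < ε)
    (hd : ∀ u, 0 ≤ u → deriv f u ≤ -ε) (hlb : ∀ t, 0 ≤ t → 0 ≤ f t) : False := by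
  set g : ℝ → ℝ := fun t => f t + ε * t with hg
  have hgd : Differentiable ℝ g := hf.add (differentiable_id.const_mul ε)
  have hganti : AntitoneOn g (Set.Ici (0:ℝ)) := by
    apply antitoneOn_of_deriv_nonpos (convex_Ici 0) hgd.continuous.continuousOn
      hgd.differentiableOn
    intro u hu
    rw [interior_Ici] at hu
    show deriv g u ≤ 0
    have h1 : HasDerivAt g (deriv f u + ε) u := by
      exact (by simpa using ((hf u).hasDerivAt).add ((hasDerivAt_id u).const_mul ε) :
        HasDerivAt (f + fun y => ε * y) (deriv f u + ε) u)
    rw [h1.deriv]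
    have := hd u hu.le
    linarith
  have h0 : 0 ≤ f 0 := hlb 0 le_rfl
  set t : ℝ := f 0 / ε + 1 with ht
  have htpos : (0:ℝ) ≤ t := by positivity
  have hgt : g t ≤ g 0 := hganti (Set.mem_Ici.2 le_rfl) (Set.mem_Ici.2 htpos) htpos
  have het : ε * t = f 0 + ε := by rw [ht, mul_add, mul_div_assoc', mul_comm ε (f 0), mul_div_assoc, div_self hε.ne', mul_one, mul_one]
  have hft : 0 ≤ f t := hlb t htpos
  simp only [hg] at hgt
  rw [het] at hgt
  have : f t ≤ -ε := by linarith [hgt]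
  linarith

theorem stmt_15 (d : ℕ) (a b q r : ℝ) (ha : 0 < a) (hb : 0 < b)
    (hq : 2 ≤ q) (hqr : q < r)
    (v : ℝ → EuclideanSpace ℝ (Fin d)) (hv : ContDiff ℝ 1 v)
    (hpos : ∀ t, 0 ≤ t → 0 < ‖v t‖)
    (hineq : ∀ t, 0 ≤ t →
      (inner ℝ (v t) (deriv v t) : ℝ) ≤ b * ‖v t‖ ^ q * (a / b - ‖v t‖ ^ (r - q))) :
    (∀ T, 0 ≤ T → ‖v T‖ ≤ (a / b) ^ (1 / (r - q)) →
      ∀ t, T ≤ t → ‖v t‖ ≤ (a / b) ^ (1 / (r - q))) ∧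
    Filter.limsup (fun t => ‖v t‖) Filter.atTop ≤ (a / b) ^ (1 / (r - q)) := by
  have hrq : 0 < r - q := sub_pos.2 hqr
  have hab : 0 < a / b := div_pos ha hb
  set M : ℝ := (a / b) ^ (1 / (r - q)) with hMdef
  have hM : 0 < M := Real.rpow_pos_of_pos hab _
  have hMpow : M ^ (r - q) = a / b := by
    rw [hMdef, ← Real.rpow_mul hab.le, one_div, inv_mul_cancel₀ hrq.ne', Real.rpow_one]
  have hvd : Differentiable ℝ v := hv.differentiable one_ne_zero
  set f : ℝ → ℝ := fun t => (inner ℝ (v t) (v t) : ℝ) with hfdef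
  have hfd : Differentiable ℝ f := fun t => DifferentiableAt.inner ℝ (hvd t) (hvd t)
  have hderiv : ∀ t, deriv f t = 2 * (inner ℝ (v t) (deriv v t) : ℝ) := by
    intro t
    have h := HasDerivAt.inner (𝕜 := ℝ) ((hvd t).hasDerivAt) ((hvd t).hasDerivAt)
    rw [h.deriv, real_inner_comm (deriv v t) (v t)]
    ring
  have hfnorm : ∀ t, f t = ‖v t‖ ^ 2 := fun t => real_inner_self_eq_norm_sq (v t)
  have hneg : ∀ u, 0 ≤ u → M < ‖v u‖ → deriv f u < 0 := by
    intro u hu hMu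
    have h1 := hineq u hu
    have h2 : a / b < ‖v u‖ ^ (r - q) := by
      rw [← hMpow]; exact Real.rpow_lt_rpow hM.le hMu hrq
    have h3 : 0 < ‖v u‖ ^ q := Real.rpow_pos_of_pos (hpos u hu) q
    rw [hderiv u]
    have h5 : b * ‖v u‖ ^ q * (a / b - ‖v u‖ ^ (r - q)) < 0 :=
      mul_neg_of_pos_of_neg (mul_pos hb h3) (by linarith)
    linarith
  have hinvc : ∀ c, M ≤ c → ∀ T, 0 ≤ T → ‖v T‖ ≤ c → ∀ t, T ≤ t → ‖v t‖ ≤ c := by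
    intro c hc T hT hvT t ht
    have hc0 : 0 < c := hM.trans_le hc
    have hsq : f t ≤ c ^ 2 := by
      refine aux_inv f hfd ?_ ?_ t ht
      · rw [hfnorm]; exact pow_le_pow_left₀ (norm_nonneg _) hvT 2
      · intro u hu hcu
        rw [hfnorm] at hcu
        have hcv : c < ‖v u‖ := lt_of_pow_lt_pow_left₀ 2 (norm_nonneg _) hcu
        exact hneg u (hT.trans hu) (lt_of_le_of_lt hc hcv)
    rw [hfnorm] at hsq
    exact le_of_pow_le_pow_left₀ two_ne_zero hc0.le hsq
  have hexists : ∀ c, M < c → ∃ T, 0 ≤ T ∧ ‖v T‖ ≤ c := by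
    intro c hc
    by_contra hcon
    push_neg at hcon
    have hc0 : 0 < c := hM.trans hc
    have hcab : a / b < c ^ (r - q) := by
      rw [← hMpow]; exact Real.rpow_lt_rpow hM.le hc hrq
    have h4 : 0 < c ^ q := Real.rpow_pos_of_pos hc0 q
    have hεpos : 0 < 2 * (b * c ^ q * (c ^ (r - q) - a / b)) := by
      have := mul_pos (mul_pos hb h4) (sub_pos.2 hcab); linarith
    refine aux_decay f hfd hεpos ?_ ?_
    · intro u hu
      have h1 := hineq u hu
      have hvu : c < ‖v u‖ := hcon u hu
      have h2 : c ^ (r - q) < ‖v u‖ ^ (r - q) := Real.rpow_lt_rpow hc0.le hvu hrq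
      have h3 : c ^ q ≤ ‖v u‖ ^ q := Real.rpow_le_rpow hc0.le hvu.le (by linarith)
      rw [hderiv u]
      have hX : 0 < ‖v u‖ ^ q := h4.trans_le h3
      have e1 : b * ‖v u‖ ^ q * (a / b - ‖v u‖ ^ (r - q)) ≤
          b * ‖v u‖ ^ q * (a / b - c ^ (r - q)) :=
        mul_le_mul_of_nonneg_left (by linarith) (by positivity)
      have e2 : b * ‖v u‖ ^ q * (a / b - c ^ (r - q)) ≤
          b * c ^ q * (a / b - c ^ (r - q)) :=
        mul_le_mul_of_nonpos_right (mul_le_mul_of_nonneg_left h3 hb.le) (by linarith)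
      nlinarith [h1, e1, e2]
    · intro t ht
      rw [hfnorm]; positivity
  refine ⟨hinvc M le_rfl, ?_⟩
  have hcb : Filter.IsCoboundedUnder (· ≤ ·) Filter.atTop (fun t => ‖v t‖) :=
    Filter.isCoboundedUnder_le_of_le Filter.atTop (x := 0) (fun i => norm_nonneg _)
  refine le_of_forall_pos_le_add ?_
  intro ε hε
  obtain ⟨T, hT0, hTle⟩ := hexists (M + ε) (by linarith)
  refine Filter.limsup_le_of_le hcb ?_
  exact Filter.eventually_atTop.2
    ⟨T, fun t ht => hinvc (M + ε) (by linarith) T hT0 hTle t ht⟩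
end

section
/- Let a, b > 0, 2 ≤ q < r, set C := (a/b)^{1/(r−q)}, and let y : [T, ∞) → ℝ be continuously differentiable with y(t) > C² for all t ≥ T (y representing ‖v_M(t)‖²) and (1/2) y'(t) ≤ −b y(t)^{q/2} (y(t)^{(r−q)/2} − C^{r−q}). Then y(t) − C² ≤ (y(T) − C²) exp(−b ξ₀ C^q (r−q)(t − T)) for all t ≥ T, where ξ₀ = C^{r−q−2} if r − q ≥ 2 and ξ₀ = y(T)^{(r−q−2)/2} if r − q < 2. -/
open Real

/-- MVT-based estimate for rpow. -/
lemma mvt_rpow_s16 (p m c s : ℝ) (hc : 0 < c) (hcs : c ≤ s) (hp : 0 < p)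
    (hm : ∀ ξ, c ≤ ξ → ξ ≤ s → m ≤ ξ ^ (p - 1)) :
    p * m * (s - c) ≤ s ^ p - c ^ p := by
  rcases eq_or_lt_of_le hcs with h | h
  · simp [← h]
  · obtain ⟨ξ, hξ, hderiv⟩ := exists_hasDerivAt_eq_slope (fun x => x ^ p)
      (fun x => p * x ^ (p - 1)) h
      (fun x hx => (Real.continuousAt_rpow_const x p
        (Or.inl (ne_of_gt (lt_of_lt_of_le hc hx.1)))).continuousWithinAt)
      (fun x hx => Real.hasDerivAt_rpow_const (Or.inl (ne_of_gt (lt_trans hc hx.1))))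
    have hslope : (s ^ p - c ^ p) / (s - c) = p * ξ ^ (p - 1) := hderiv.symm
    have hsc : 0 < s - c := sub_pos.mpr h
    have hmξ : m ≤ ξ ^ (p - 1) := hm ξ hξ.1.le hξ.2.le
    have : s ^ p - c ^ p = p * ξ ^ (p - 1) * (s - c) := by
      field_simp at hslope; linarith [hslope]
    rw [this]
    have := mul_le_mul_of_nonneg_left hmξ hp.le
    nlinarith

set_option maxHeartbeats 1000000 in
theorem stmt_16 (a b q r T : ℝ) (ha : 0 < a) (hb : 0 < b) (hq : 2 ≤ q) (hqr : q < r)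
    (C : ℝ) (hC : C = (a / b) ^ (1 / (r - q)))
    (y : ℝ → ℝ) (hy : ContDiff ℝ 1 y)
    (hyC : ∀ t, T ≤ t → C ^ 2 < y t)
    (hineq : ∀ t, T ≤ t →
      (1 / 2) * deriv y t ≤ -b * (y t) ^ (q / 2) * ((y t) ^ ((r - q) / 2) - C ^ (r - q)))
    (ξ₀ : ℝ) (hξ₀ : ξ₀ = if 2 ≤ r - q then C ^ (r - q - 2) else (y T) ^ ((r - q - 2) / 2)) :
    ∀ t, T ≤ t →
      y t - C ^ 2 ≤ (y T - C ^ 2) * Real.exp (-b * ξ₀ * C ^ q * (r - q) * (t - T)) := by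
  have hC0 : 0 < C := by
    rw [hC]; exact Real.rpow_pos_of_pos (div_pos ha hb) _
  set p : ℝ := (r - q) / 2 with hpdef
  have hp : 0 < p := by unfold p; linarith
  have hc : (0 : ℝ) < C ^ 2 := by positivity
  have hC2 : ∀ e : ℝ, (C ^ 2 : ℝ) ^ e = C ^ (2 * e) := by
    intro e
    rw [← Real.rpow_natCast C 2, ← Real.rpow_mul hC0.le]
    norm_num
  have hCrq : (C ^ 2 : ℝ) ^ p = C ^ (r - q) := by
    rw [hC2]; unfold p; ring_nf
  have hCq : (C ^ 2 : ℝ) ^ (q / 2) = C ^ q := by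
    rw [hC2]; ring_nf
  have hydiff : Differentiable ℝ y := hy.differentiable one_ne_zero
  -- y is antitone on Ici T
  have hderiv_nonpos : ∀ t, T ≤ t → deriv y t ≤ 0 := by
    intro t ht
    have h1 := hineq t ht
    have hyt : C ^ 2 < y t := hyC t ht
    have h2 : C ^ (r - q) ≤ (y t) ^ p := by
      rw [← hCrq]; exact Real.rpow_le_rpow hc.le hyt.le hp.le
    have h3 : 0 < (y t) ^ (q / 2) := Real.rpow_pos_of_pos (hc.trans hyt) _
    nlinarith [mul_nonneg (mul_nonneg hb.le h3.le) (sub_nonneg.mpr h2)]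
  have hmono : AntitoneOn y (Set.Ici T) := by
    apply antitoneOn_of_deriv_nonpos (convex_Ici T) hy.continuous.continuousOn
      (hydiff.differentiableOn)
    intro x hx
    rw [interior_Ici] at hx
    exact hderiv_nonpos x (le_of_lt hx)
  set K : ℝ := b * ξ₀ * C ^ q * (r - q) with hKdef
  have hyT : 0 < y T := hc.trans (hyC T le_rfl)
  have hξpos : 0 < ξ₀ := by
    rw [hξ₀]; split
    · exact Real.rpow_pos_of_pos hC0 _
    · exact Real.rpow_pos_of_pos hyT _
  -- key pointwise inequality
  have hkey : ∀ t, T ≤ t → deriv y t ≤ -K * (y t - C ^ 2) := by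
    intro t ht
    have hyt : C ^ 2 < y t := hyC t ht
    have hytT : y t ≤ y T := hmono Set.self_mem_Ici ht ht
    have hmvt : p * ξ₀ * (y t - C ^ 2) ≤ (y t) ^ p - (C ^ 2 : ℝ) ^ p := by
      apply mvt_rpow_s16 p ξ₀ (C ^ 2) (y t) hc hyt.le hp
      intro ξ hξ1 hξ2
      rw [hξ₀]; split_ifs with hcase
      · have : (C ^ 2 : ℝ) ^ (p - 1) ≤ ξ ^ (p - 1) :=
          Real.rpow_le_rpow hc.le hξ1 (by unfold p; linarith)
        calc C ^ (r - q - 2) = (C ^ 2 : ℝ) ^ (p - 1) := by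
              rw [hC2]; unfold p; ring_nf
          _ ≤ ξ ^ (p - 1) := this
      · push_neg at hcase
        have hξY : ξ ≤ y T := le_trans hξ2 hytT
        have : (y T) ^ (p - 1) ≤ ξ ^ (p - 1) :=
          Real.rpow_le_rpow_of_nonpos (hc.trans_le hξ1) hξY (by unfold p; linarith)
        calc (y T) ^ ((r - q - 2) / 2) = (y T) ^ (p - 1) := by unfold p; ring_nf
          _ ≤ ξ ^ (p - 1) := this
    have hq2 : C ^ q ≤ (y t) ^ (q / 2) := by
      rw [← hCq]; exact Real.rpow_le_rpow hc.le hyt.le (by linarith)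
    have h1 := hineq t ht
    rw [hCrq] at hmvt
    have hposq : 0 < C ^ q := Real.rpow_pos_of_pos hC0 _
    have h2p : 2 * p = r - q := by unfold p; ring
    have hsub : 0 ≤ y t - C ^ 2 := by linarith
    -- deriv y t ≤ -2 b (y t)^{q/2} ((y t)^p - C^{r-q}) ≤ -2 b C^q p ξ₀ (y t - C^2)
    have step1 : deriv y t ≤ -2 * b * ((y t) ^ (q / 2)) * ((y t) ^ p - C ^ (r - q)) := by
      nlinarith [h1]
    have step2 : -2 * b * ((y t) ^ (q / 2)) * ((y t) ^ p - C ^ (r - q)) ≤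
        -2 * b * ((y t) ^ (q / 2)) * (p * ξ₀ * (y t - C ^ 2)) := by
      have h3 : (0:ℝ) < (y t) ^ (q / 2) := Real.rpow_pos_of_pos (hc.trans hyt) _
      have hb2 : 0 ≤ 2 * b * ((y t) ^ (q / 2)) := by nlinarith
      nlinarith
    have step3 : -2 * b * ((y t) ^ (q / 2)) * (p * ξ₀ * (y t - C ^ 2)) ≤
        -2 * b * (C ^ q) * (p * ξ₀ * (y t - C ^ 2)) := by
      have hco : 0 ≤ p * ξ₀ * (y t - C ^ 2) :=
        mul_nonneg (mul_nonneg hp.le hξpos.le) hsub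
      nlinarith [mul_nonneg (mul_nonneg hb.le (sub_nonneg.mpr hq2)) hco]
    have : -2 * b * (C ^ q) * (p * ξ₀ * (y t - C ^ 2)) = -K * (y t - C ^ 2) := by
      rw [hKdef, ← h2p]; ring
    linarith [step1, step2, step3, this.le]
  -- Gronwall via monotonicity of g
  set g : ℝ → ℝ := fun t => (y t - C ^ 2) * Real.exp (K * (t - T)) with hgdef
  have hgderiv : ∀ t, HasDerivAt g
      (deriv y t * Real.exp (K * (t - T)) + (y t - C ^ 2) * (Real.exp (K * (t - T)) * K)) t := by
    intro t
    have h1 : HasDerivAt (fun s => K * (s - T)) K t := by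
      simpa using (((hasDerivAt_id t).sub_const T).const_mul K)
    have h2 : HasDerivAt (fun s => Real.exp (K * (s - T))) (Real.exp (K * (t - T)) * K) t :=
      h1.exp
    exact (((hydiff t).hasDerivAt).sub_const (C ^ 2)).mul h2
  have hganti : AntitoneOn g (Set.Ici T) := by
    apply antitoneOn_of_deriv_nonpos (convex_Ici T)
    · exact ((hy.continuous.sub continuous_const).mul
        (Real.continuous_exp.comp
          (continuous_const.mul (continuous_id.sub continuous_const)))).continuousOn
    · intro x _; exact (hgderiv x).differentiableAt.differentiableWithinAt
    · intro x hx
      rw [interior_Ici] at hx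
      rw [(hgderiv x).deriv]
      have hk := hkey x (le_of_lt hx)
      have he : 0 < Real.exp (K * (x - T)) := Real.exp_pos _
      nlinarith
  intro t ht
  have hgle : g t ≤ g T := hganti Set.self_mem_Ici ht ht
  have hgT : g T = y T - C ^ 2 := by simp [hgdef]
  rw [hgT] at hgle
  have hexp : Real.exp (-b * ξ₀ * C ^ q * (r - q) * (t - T)) = (Real.exp (K * (t - T)))⁻¹ := by
    rw [← Real.exp_neg, hKdef]; ring_nf
  rw [hexp, ← div_eq_mul_inv, le_div_iff₀ (Real.exp_pos _)]
  exact hgle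
end
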